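/- arXiv:1701.03892 — 9 statements merged into one kernel-verified Lean document; each statement's English description precedes it below -/
import Mathlib

section
/- Theorem 2.1 (sufficiency): Let p : ℕ → ℝ with p_i ≥ 0 and Σ_{i=0}^∞ p_i = 1 be a DPCP distribution, i.e. there exist λ > 0 and a real sequence (α_k)_{k≥1} with Σ_{k≥1} α_k = 1 and Σ_{k≥1} |α_k| < ∞ such that Σ_{i=0}^∞ p_i z^i = exp(λ Σ_{k≥1} α_k (z^k − 1)) for all complex z with |z| ≤ 1. Then p is signed discrete infinitely divisible: for every integer n ≥ 1 there exists q^{(n)} : ℕ → ℝ with Σ_i q^{(n)}_i = 1 and Σ_i |q^{(n)}_i| < ∞ such that (Σ_{i=0}^∞ q^{(n)}_i z^i)^n = Σ_{i=0}^∞ p_i z^i for all complex z with |z| ≤ 1. -/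
open Finset

/-- `m`-fold convolution power of a sequence. -/
noncomputable def convPow (a : ℕ → ℝ) : ℕ → ℕ → ℝ
  | 0 => fun i => if i = 0 then 1 else 0
  | (m+1) => fun i => ∑ j ∈ Finset.range (i+1), a j * convPow a m (i - j)

lemma convPow_abs_nonneg (a : ℕ → ℝ) : ∀ m i, 0 ≤ convPow (fun k => |a k|) m i := by
  intro m
  induction m with
  | zero => intro i; simp [convPow]; split <;> norm_num
  | succ m ih =>
    intro i
    apply Finset.sum_nonneg
    intro j _
    exact mul_nonneg (abs_nonneg _) (ih _)

lemma abs_convPow_le (a : ℕ → ℝ) : ∀ m i, |convPow a m i| ≤ convPow (fun k => |a k|) m i := by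
  intro m
  induction m with
  | zero => intro i; simp [convPow]; split <;> norm_num
  | succ m ih =>
    intro i
    calc |∑ j ∈ Finset.range (i+1), a j * convPow a m (i - j)|
        ≤ ∑ j ∈ Finset.range (i+1), |a j * convPow a m (i - j)| :=
          Finset.abs_sum_le_sum_abs _ _
      _ ≤ ∑ j ∈ Finset.range (i+1), |a j| * convPow (fun k => |a k|) m (i - j) := by
          apply Finset.sum_le_sum
          intro j _
          rw [abs_mul]
          exact mul_le_mul_of_nonneg_left (ih _) (abs_nonneg _)

lemma summable_convPow_abs (a : ℕ → ℝ) (ha : Summable fun k => |a k|) :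
    ∀ m, Summable (fun i => convPow (fun k => |a k|) m i) ∧
      (∑' i, convPow (fun k => |a k|) m i) = (∑' k, |a k|) ^ m := by
  intro m
  induction m with
  | zero =>
    constructor
    · exact (hasSum_ite_eq 0 (1:ℝ)).summable
    · simpa [convPow] using (hasSum_ite_eq 0 (1:ℝ)).tsum_eq
  | succ m ih =>
    have hfn : Summable fun k => ‖|a k|‖ := by simpa using ha
    have hgn : Summable fun i => ‖convPow (fun k => |a k|) m i‖ := by
      simpa [Real.norm_eq_abs, abs_of_nonneg (convPow_abs_nonneg a m _)] using ih.1
    have hs := summable_norm_sum_mul_range_of_summable_norm hfn hgn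
    have hnn : ∀ i, (0:ℝ) ≤ ∑ j ∈ Finset.range (i+1), |a j| * convPow (fun k => |a k|) m (i - j) :=
      fun i => Finset.sum_nonneg fun j _ => mul_nonneg (abs_nonneg _) (convPow_abs_nonneg a m _)
    constructor
    · show Summable fun i => ∑ j ∈ Finset.range (i+1), |a j| * convPow (fun k => |a k|) m (i - j)
      refine hs.congr fun i => ?_
      rw [Real.norm_eq_abs, abs_of_nonneg (hnn i)]
    · show (∑' i, ∑ j ∈ Finset.range (i+1), |a j| * convPow (fun k => |a k|) m (i - j)) = _
      rw [← tsum_mul_tsum_eq_tsum_sum_range_of_summable_norm hfn hgn, ih.2, pow_succ]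
      ring

lemma summable_abs_convPow (a : ℕ → ℝ) (ha : Summable fun k => |a k|) (m : ℕ) :
    Summable fun i => |convPow a m i| :=
  ((summable_convPow_abs a ha m).1).of_nonneg_of_le (fun _ => abs_nonneg _)
    (fun i => abs_convPow_le a m i)

lemma convPow_abs_le_pow (a : ℕ → ℝ) (ha : Summable fun k => |a k|) (m i : ℕ) :
    convPow (fun k => |a k|) m i ≤ (∑' k, |a k|) ^ m := by
  rw [← (summable_convPow_abs a ha m).2]
  exact Summable.le_tsum (summable_convPow_abs a ha m).1 i
    (fun j _ => convPow_abs_nonneg a m j)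

lemma summable_norm_convPow_mul_pow (a : ℕ → ℝ) (ha : Summable fun k => |a k|)
    (m : ℕ) {z : ℂ} (hz : ‖z‖ ≤ 1) :
    Summable fun i => ‖(convPow a m i : ℂ) * z ^ i‖ := by
  refine ((summable_convPow_abs a ha m).1).of_nonneg_of_le (fun _ => norm_nonneg _) fun i => ?_
  rw [norm_mul, Complex.norm_real, Real.norm_eq_abs, norm_pow]
  calc |convPow a m i| * ‖z‖ ^ i ≤ |convPow a m i| * 1 := by
        exact mul_le_mul_of_nonneg_left (pow_le_one₀ (norm_nonneg _) hz) (abs_nonneg _)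
    _ ≤ convPow (fun k => |a k|) m i := by rw [mul_one]; exact abs_convPow_le a m i

lemma summable_norm_coeff_mul_pow (a : ℕ → ℝ) (ha : Summable fun k => |a k|)
    {z : ℂ} (hz : ‖z‖ ≤ 1) :
    Summable fun k => ‖(a k : ℂ) * z ^ k‖ := by
  refine ha.of_nonneg_of_le (fun _ => norm_nonneg _) fun k => ?_
  rw [norm_mul, Complex.norm_real, Real.norm_eq_abs, norm_pow]
  calc |a k| * ‖z‖ ^ k ≤ |a k| * 1 :=
        mul_le_mul_of_nonneg_left (pow_le_one₀ (norm_nonneg _) hz) (abs_nonneg _)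
    _ = |a k| := mul_one _

lemma tsum_convPow_mul_pow (a : ℕ → ℝ) (ha : Summable fun k => |a k|)
    {z : ℂ} (hz : ‖z‖ ≤ 1) :
    ∀ m, (∑' i, (convPow a m i : ℂ) * z ^ i) = (∑' k, (a k : ℂ) * z ^ k) ^ m := by
  intro m
  induction m with
  | zero =>
    rw [pow_zero]
    have : (fun i => (convPow a 0 i : ℂ) * z ^ i) = fun i => if i = 0 then 1 else 0 := by
      funext i
      simp only [convPow]
      split <;> simp_all
    rw [this]
    exact (hasSum_ite_eq 0 (1:ℂ)).tsum_eq
  | succ m ih =>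
    have h1 := summable_norm_coeff_mul_pow a ha hz
    have h2 := summable_norm_convPow_mul_pow a ha m hz
    have key : (fun i => (convPow a (m+1) i : ℂ) * z ^ i) =
        fun i => ∑ j ∈ Finset.range (i+1),
          ((a j : ℂ) * z ^ j) * ((convPow a m (i - j) : ℂ) * z ^ (i - j)) := by
      funext i
      simp only [convPow]
      push_cast
      rw [Finset.sum_mul]
      apply Finset.sum_congr rfl
      intro j hj
      have hji : j ≤ i := Nat.lt_succ_iff.mp (Finset.mem_range.mp hj)
      rw [show (a j : ℂ) * z ^ j * ((convPow a m (i - j) : ℂ) * z ^ (i - j)) =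
          (a j : ℂ) * (convPow a m (i - j) : ℂ) * (z ^ j * z ^ (i - j)) by ring,
        ← pow_add, Nat.add_sub_cancel' hji]
    rw [key, ← tsum_mul_tsum_eq_tsum_sum_range_of_summable_norm h1 h2, ih, pow_succ]
    ring

set_option maxHeartbeats 1600000 in
/-- Theorem 2.1 (sufficiency): a DPCP distribution on ℕ is signed discrete
infinitely divisible.  Here `α k` stands for `α_{k+1}` (the sequence indexed
from 1) and the p.g.f. is `z ↦ ∑' i, p i * z ^ i` on the closed unit disk. -/
theorem dpcp_implies_signed_discrete_infinitely_divisible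
    (p : ℕ → ℝ) (hp : ∀ i, 0 ≤ p i) (hp1 : (∑' i, p i) = 1)
    (lam : ℝ) (hlam : 0 < lam) (α : ℕ → ℝ)
    (hα1 : (∑' k, α k) = 1) (hαabs : Summable (fun k => |α k|))
    (hDPCP : ∀ z : ℂ, ‖z‖ ≤ 1 →
      (∑' i, (p i : ℂ) * z ^ i) =
        Complex.exp ((lam : ℂ) * ∑' k, (α k : ℂ) * (z ^ (k + 1) - 1))) :
    ∀ n : ℕ, 1 ≤ n → ∃ q : ℕ → ℝ,
      (∑' i, q i) = 1 ∧ Summable (fun i => |q i|) ∧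
      ∀ z : ℂ, ‖z‖ ≤ 1 →
        (∑' i, (q i : ℂ) * z ^ i) ^ n = ∑' i, (p i : ℂ) * z ^ i := by
  intro n hn
  -- the shifted sequence `a 0 = 0`, `a (k+1) = α k`
  set a : ℕ → ℝ := fun k => Nat.rec 0 (fun k _ => α k) k with ha_def
  have ha0 : a 0 = 0 := rfl
  have haS : ∀ k, a (k + 1) = α k := fun k => rfl
  have ha : Summable fun k => |a k| := by
    refine (summable_nat_add_iff 1).mp ?_
    simpa [haS] using hαabs
  have ha' : Summable a := summable_abs_iff.mp ha
  have hα : Summable α := summable_abs_iff.mp hαabs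
  have hsum_a : (∑' k, a k) = 1 := by
    rw [Summable.tsum_eq_zero_add ha', ha0, zero_add]
    simpa [haS] using hα1
  set C : ℝ := ∑' k, |a k| with hC_def
  have hC0 : 0 ≤ C := tsum_nonneg fun k => abs_nonneg _
  have hn0 : (n : ℝ) ≠ 0 := Nat.cast_ne_zero.mpr (by omega)
  have hn0' : (n : ℂ) ≠ 0 := Nat.cast_ne_zero.mpr (by omega)
  set t : ℝ := lam / n with ht_def
  have ht : 0 < t := div_pos hlam (by positivity)
  set c : ℕ → ℝ := fun m => t ^ m / m.factorial with hc_def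
  have hc_nonneg : ∀ m, 0 ≤ c m := fun m => by positivity
  have hc_sum : Summable fun m => c m * C ^ m := by
    have : (fun m => c m * C ^ m) = fun m => (t * C) ^ m / m.factorial := by
      funext m; rw [hc_def, mul_pow]; ring
    rw [this]
    exact Real.summable_pow_div_factorial (t * C)
  -- summability of the nonnegative double family
  have hrow : ∀ m, Summable fun i => c m * convPow (fun k => |a k|) m i :=
    fun m => ((summable_convPow_abs a ha m).1).mul_left _
  have hH : Summable (fun mi : ℕ × ℕ => c mi.1 * convPow (fun k => |a k|) mi.1 mi.2) := by
    refine (summable_prod_of_nonneg ?_).mpr ⟨fun m => hrow m, ?_⟩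
    · intro mi
      exact mul_nonneg (hc_nonneg _) (convPow_abs_nonneg a _ _)
    · refine hc_sum.congr fun m => ?_
      have : (∑' y, c m * convPow (fun k => |a k|) m y) = c m * C ^ m := by
        rw [tsum_mul_left, (summable_convPow_abs a ha m).2]
      exact this.symm
  -- summability of the inner sums defining q
  have hinner_abs : ∀ i, Summable fun m => |c m * convPow a m i| := by
    intro i
    refine (hH.prod_symm.prod_factor i).of_nonneg_of_le (fun _ => abs_nonneg _) fun m => ?_
    show |c m * convPow a m i| ≤ c m * convPow (fun k => |a k|) m i
    rw [abs_mul, abs_of_nonneg (hc_nonneg m)]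
    exact mul_le_mul_of_nonneg_left (abs_convPow_le a m i) (hc_nonneg m)
  have hinner : ∀ i, Summable fun m => c m * convPow a m i :=
    fun i => summable_abs_iff.mp (hinner_abs i)
  set q : ℕ → ℝ := fun i => Real.exp (-t) * ∑' m, c m * convPow a m i with hq_def
  -- the complex double family is summable
  have hG : ∀ z : ℂ, ‖z‖ ≤ 1 →
      Summable (Function.uncurry fun m i => (c m : ℂ) * ((convPow a m i : ℂ) * z ^ i)) := by
    intro z hz
    apply Summable.of_norm
    refine hH.of_nonneg_of_le (fun _ => norm_nonneg _) fun mi => ?_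
    show ‖(c mi.1 : ℂ) * ((convPow a mi.1 mi.2 : ℂ) * z ^ mi.2)‖ ≤ _
    rw [norm_mul, norm_mul, Complex.norm_real, Complex.norm_real, Real.norm_eq_abs,
      Real.norm_eq_abs, norm_pow, abs_of_nonneg (hc_nonneg _)]
    refine mul_le_mul_of_nonneg_left ?_ (hc_nonneg _)
    calc |convPow a mi.1 mi.2| * ‖z‖ ^ mi.2 ≤ |convPow a mi.1 mi.2| * 1 :=
          mul_le_mul_of_nonneg_left (pow_le_one₀ (norm_nonneg _) hz) (abs_nonneg _)
      _ ≤ convPow (fun k => |a k|) mi.1 mi.2 := by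
          rw [mul_one]; exact abs_convPow_le a mi.1 mi.2
  -- the p.g.f. of q
  have hq_pgf : ∀ z : ℂ, ‖z‖ ≤ 1 →
      (∑' i, (q i : ℂ) * z ^ i) =
        Complex.exp ((t : ℂ) * ((∑' k, (a k : ℂ) * z ^ k) - 1)) := by
    intro z hz
    have hGz := hG z hz
    have step1 : ∀ i : ℕ, ((q i : ℂ) * z ^ i) =
        Complex.exp (-(t : ℂ)) * ∑' m, (c m : ℂ) * ((convPow a m i : ℂ) * z ^ i) := by
      intro i
      have : ((q i : ℂ)) = Complex.exp (-(t : ℂ)) * ∑' m, (c m : ℂ) * (convPow a m i : ℂ) := by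
        rw [hq_def]
        push_cast [Complex.ofReal_tsum, Complex.ofReal_exp]
        ring_nf
      rw [this, mul_assoc, ← tsum_mul_right]
      congr 1
      apply tsum_congr
      intro m
      ring
    calc (∑' i, (q i : ℂ) * z ^ i)
        = ∑' i, Complex.exp (-(t : ℂ)) * ∑' m, (c m : ℂ) * ((convPow a m i : ℂ) * z ^ i) :=
          tsum_congr step1
      _ = Complex.exp (-(t : ℂ)) * ∑' i, ∑' m, (c m : ℂ) * ((convPow a m i : ℂ) * z ^ i) :=
          tsum_mul_left
      _ = Complex.exp (-(t : ℂ)) * ∑' m, ∑' i, (c m : ℂ) * ((convPow a m i : ℂ) * z ^ i) := by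
          rw [Summable.tsum_comm hGz]
      _ = Complex.exp (-(t : ℂ)) * ∑' m, (c m : ℂ) * (∑' k, (a k : ℂ) * z ^ k) ^ m := by
          congr 1
          apply tsum_congr
          intro m
          rw [tsum_mul_left, tsum_convPow_mul_pow a ha hz m]
      _ = Complex.exp (-(t : ℂ)) *
            Complex.exp ((t : ℂ) * ∑' k, (a k : ℂ) * z ^ k) := by
          congr 1
          rw [Complex.exp_eq_exp_ℂ, NormedSpace.exp_eq_tsum_div]
          apply tsum_congr
          intro m
          rw [hc_def]
          push_cast
          rw [mul_pow]
          ring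
      _ = Complex.exp ((t : ℂ) * ((∑' k, (a k : ℂ) * z ^ k) - 1)) := by
          rw [← Complex.exp_add]
          congr 1
          ring
  -- rewriting the DPCP exponent
  have hS : ∀ z : ℂ, ‖z‖ ≤ 1 →
      (∑' k, (α k : ℂ) * (z ^ (k + 1) - 1)) = (∑' k, (a k : ℂ) * z ^ k) - 1 := by
    intro z hz
    have h1 : Summable fun k => (α k : ℂ) * z ^ (k + 1) := by
      apply Summable.of_norm
      refine hαabs.of_nonneg_of_le (fun _ => norm_nonneg _) fun k => ?_
      rw [norm_mul, Complex.norm_real, Real.norm_eq_abs, norm_pow]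
      calc |α k| * ‖z‖ ^ (k + 1) ≤ |α k| * 1 :=
            mul_le_mul_of_nonneg_left (pow_le_one₀ (norm_nonneg _) hz) (abs_nonneg _)
        _ = |α k| := mul_one _
    have h2 : Summable fun k => (α k : ℂ) := Complex.summable_ofReal.mpr hα
    have e1 : ∀ k : ℕ, (α k : ℂ) * (z ^ (k + 1) - 1) =
        (α k : ℂ) * z ^ (k + 1) - (α k : ℂ) := fun k => by ring
    rw [tsum_congr e1, Summable.tsum_sub h1 h2]
    congr 1
    · have hsg : Summable fun k => (a k : ℂ) * z ^ k :=
        (summable_norm_coeff_mul_pow a ha hz).of_norm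
      rw [Summable.tsum_eq_zero_add hsg, ha0]
      simp only [Complex.ofReal_zero, zero_mul, zero_add]
      rfl
    · rw [← Complex.ofReal_tsum, hα1, Complex.ofReal_one]
  -- summability of |q|
  have habs : Summable fun i => |q i| := by
    have hr : Summable fun i => Real.exp (-t) *
        ∑' m, c m * convPow (fun k => |a k|) m i :=
      (hH.prod_symm.prod).mul_left _
    refine hr.of_nonneg_of_le (fun _ => abs_nonneg _) fun i => ?_
    rw [hq_def]
    show |Real.exp (-t) * ∑' m, c m * convPow a m i| ≤ _
    rw [abs_mul, abs_of_nonneg (Real.exp_pos _).le]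
    refine mul_le_mul_of_nonneg_left ?_ (Real.exp_pos _).le
    calc |∑' m, c m * convPow a m i| ≤ ∑' m, |c m * convPow a m i| := by
          have hb := norm_tsum_le_tsum_norm (f := fun m => c m * convPow a m i)
            (by simpa only [Real.norm_eq_abs] using hinner_abs i)
          simpa only [Real.norm_eq_abs] using hb
      _ ≤ ∑' m, c m * convPow (fun k => |a k|) m i := by
          refine Summable.tsum_le_tsum (fun m => ?_) (hinner_abs i) (hH.prod_symm.prod_factor i)
          rw [abs_mul, abs_of_nonneg (hc_nonneg m)]
          exact mul_le_mul_of_nonneg_left (abs_convPow_le a m i) (hc_nonneg m)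
  -- value of the p.g.f. at 1
  have hg1 : (∑' k, (a k : ℂ) * (1 : ℂ) ^ k) = 1 := by
    simp only [one_pow, mul_one]
    rw [← Complex.ofReal_tsum, hsum_a, Complex.ofReal_one]
  have hq1 : (∑' i, q i) = 1 := by
    have h := hq_pgf 1 (by norm_num)
    rw [hg1] at h
    simp only [one_pow, mul_one, sub_self, mul_zero, Complex.exp_zero] at h
    have : ((∑' i, q i : ℝ) : ℂ) = 1 := by
      rw [Complex.ofReal_tsum]
      exact h
    exact_mod_cast this
  refine ⟨q, hq1, habs, fun z hz => ?_⟩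
  rw [hq_pgf z hz, hDPCP z hz, ← Complex.exp_nat_mul]
  congr 1
  rw [hS z hz]
  have htc : ((t : ℝ) : ℂ) = (lam : ℂ) / (n : ℂ) := by
    rw [ht_def]; push_cast; ring
  rw [htc, ← mul_assoc, mul_div_cancel₀ _ hn0']
end

section
/- Lemma 2.5: Let p : ℕ → ℝ with p_i ≥ 0 and Σ_{i=0}^∞ p_i = 1, and let G(z) = Σ_{i=0}^∞ p_i z^i for complex |z| ≤ 1. Suppose that for every integer n ≥ 1 there exists q^{(n)} : ℕ → ℝ with Σ_i q^{(n)}_i = 1 and Σ_i |q^{(n)}_i| < ∞ such that (Σ_{i=0}^∞ q^{(n)}_i z^i)^n = G(z) for all |z| ≤ 1, and suppose sup_n Σ_i |q^{(n)}_i| < ∞ and lim_{M→∞} sup_n Σ_{i>M} |q^{(n)}_i| = 0. Then G(z) ≠ 0 for all complex z with |z| ≤ 1. -/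
open Filter

private lemma aux_pow_sub_pow {z w : ℂ} (hz : ‖z‖ ≤ 1) (hw : ‖w‖ ≤ 1) (i : ℕ) :
    ‖z ^ i - w ^ i‖ ≤ i * ‖z - w‖ := by
  induction i with
  | zero => simp
  | succ n ih =>
    have h1 : z ^ (n + 1) - w ^ (n + 1) = z ^ n * (z - w) + (z ^ n - w ^ n) * w := by ring
    have h2 : ‖z ^ n * (z - w)‖ ≤ ‖z - w‖ := by
      rw [norm_mul, norm_pow]
      nlinarith [pow_le_one₀ (norm_nonneg z) hz (n := n), norm_nonneg (z - w),
        pow_nonneg (norm_nonneg z) n]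
    have h3 : ‖(z ^ n - w ^ n) * w‖ ≤ (n : ℝ) * ‖z - w‖ := by
      rw [norm_mul]
      nlinarith [norm_nonneg (z ^ n - w ^ n), norm_nonneg w, norm_nonneg (z - w)]
    calc ‖z ^ (n + 1) - w ^ (n + 1)‖
        ≤ ‖z ^ n * (z - w)‖ + ‖(z ^ n - w ^ n) * w‖ := by rw [h1]; exact norm_add_le _ _
      _ ≤ ‖z - w‖ + (n : ℝ) * ‖z - w‖ := by linarith
      _ = ((n : ℕ) + 1 : ℝ) * ‖z - w‖ := by ring
      _ = ((n + 1 : ℕ) : ℝ) * ‖z - w‖ := by push_cast; ring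

set_option maxHeartbeats 1000000 in
/-- Lemma 2.5: the p.g.f. of a signed discrete infinitely divisible
distribution (whose family of signed n-th roots `Q n = q^{(n+1)}` is bounded
in variation and uniformly tight) never vanishes on the closed unit disk. -/
theorem signed_discrete_infinitely_divisible_pgf_ne_zero
    (p : ℕ → ℝ) (hp : ∀ i, 0 ≤ p i) (hp1 : (∑' i, p i) = 1)
    (Q : ℕ → ℕ → ℝ)
    (hroot : ∀ n : ℕ, (∑' i, Q n i) = 1 ∧ Summable (fun i => |Q n i|) ∧
      ∀ z : ℂ, ‖z‖ ≤ 1 →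
        (∑' i, (Q n i : ℂ) * z ^ i) ^ (n + 1) = ∑' i, (p i : ℂ) * z ^ i)
    (hbound : ∃ C : ℝ, ∀ n, (∑' i, |Q n i|) ≤ C)
    (htight : Filter.Tendsto (fun M : ℕ => ⨆ n, ∑' i, |Q n (i + M + 1)|)
      Filter.atTop (nhds 0)) :
    ∀ z : ℂ, ‖z‖ ≤ 1 → (∑' i, (p i : ℂ) * z ^ i) ≠ 0 := by
  intro z₀ hz₀ hG0
  obtain ⟨C, hC⟩ := hbound
  set G : ℂ → ℂ := fun z => ∑' i, (p i : ℂ) * z ^ i with hGdef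
  set H : ℕ → ℂ → ℂ := fun n z => ∑' i, (Q n i : ℂ) * z ^ i with hHdef
  have hQsum : ∀ n, Summable fun i => |Q n i| := fun n => (hroot n).2.1
  have hQle : ∀ n i, |Q n i| ≤ C := fun n i =>
    le_trans (Summable.le_tsum (hQsum n) i fun j _ => abs_nonneg _) (hC n)
  have hC0 : 0 ≤ C := le_trans (abs_nonneg _) (hQle 0 0)
  have hHsum : ∀ n (z : ℂ), ‖z‖ ≤ 1 → Summable fun i => (Q n i : ℂ) * z ^ i := by
    intro n z hz
    apply Summable.of_norm_bounded (hQsum n)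
    intro i
    rw [norm_mul, norm_pow, Complex.norm_real, Real.norm_eq_abs]
    exact mul_le_of_le_one_right (abs_nonneg _) (pow_le_one₀ (norm_nonneg z) hz)
  -- pick M with uniform tail < 1/8
  obtain ⟨M, hM⟩ : ∃ M : ℕ, (⨆ n, ∑' i, |Q n (i + M + 1)|) < 1 / 8 :=
    (htight.eventually (gt_mem_nhds (by norm_num : (0 : ℝ) < 1 / 8))).exists
  have htail : ∀ n, (∑' i, |Q n (i + M + 1)|) < 1 / 8 := by
    intro n
    refine lt_of_le_of_lt
      (le_ciSup (f := fun m => ∑' i, |Q m (i + M + 1)|) ?_ n) hM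
    refine ⟨C, ?_⟩
    rintro x ⟨m, rfl⟩
    have h := Summable.sum_add_tsum_nat_add (f := fun i => |Q m i|) (M + 1) (hQsum m)
    have hnn : 0 ≤ ∑ i ∈ Finset.range (M + 1), |Q m i| :=
      Finset.sum_nonneg fun i _ => abs_nonneg _
    have : (∑' i, |Q m (i + (M + 1))|) ≤ ∑' i, |Q m i| := by linarith
    simp only [← add_assoc] at this
    exact this.trans (hC m)
  -- uniform equicontinuity constant
  set δ : ℝ := 1 / (8 * (C + 1) * (M + 1) ^ 2) with hδdef
  have hδ0 : 0 < δ := by positivity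
  have key : ∀ n (z w : ℂ), ‖z‖ ≤ 1 → ‖w‖ ≤ 1 → ‖z - w‖ < δ →
      ‖H n z - H n w‖ < 1 / 2 := by
    intro n z w hz hw hzw
    have hs1 := hHsum n z hz
    have hs2 := hHsum n w hw
    set g : ℕ → ℝ := fun i => |Q n i| * ‖z ^ i - w ^ i‖ with hgdef
    have hg_nonneg : ∀ i, 0 ≤ g i := fun i => mul_nonneg (abs_nonneg _) (norm_nonneg _)
    have hg_le : ∀ i, g i ≤ 2 * |Q n i| := by
      intro i
      have h2 : ‖z ^ i - w ^ i‖ ≤ 2 := by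
        calc ‖z ^ i - w ^ i‖ ≤ ‖z ^ i‖ + ‖w ^ i‖ := norm_sub_le _ _
          _ ≤ 1 + 1 := by
              rw [norm_pow, norm_pow]
              gcongr <;> [exact pow_le_one₀ (norm_nonneg z) hz;
                exact pow_le_one₀ (norm_nonneg w) hw]
          _ = 2 := by norm_num
      calc g i = |Q n i| * ‖z ^ i - w ^ i‖ := rfl
        _ ≤ |Q n i| * 2 := mul_le_mul_of_nonneg_left h2 (abs_nonneg _)
        _ = 2 * |Q n i| := by ring
    have hgsum : Summable g :=
      Summable.of_nonneg_of_le hg_nonneg hg_le ((hQsum n).mul_left 2)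
    have hdiff : H n z - H n w = ∑' i, (Q n i : ℂ) * (z ^ i - w ^ i) := by
      rw [hHdef]
      rw [← Summable.tsum_sub hs1 hs2]
      exact tsum_congr fun i => (mul_sub _ _ _).symm
    have hnormeq : ∀ i, ‖(Q n i : ℂ) * (z ^ i - w ^ i)‖ = g i := by
      intro i
      rw [norm_mul, Complex.norm_real, Real.norm_eq_abs]
    have hbd : ‖H n z - H n w‖ ≤ ∑' i, g i := by
      rw [hdiff]
      have := norm_tsum_le_tsum_norm (f := fun i => (Q n i : ℂ) * (z ^ i - w ^ i))
        (by simpa only [hnormeq] using hgsum)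
      simpa only [hnormeq] using this
    have hsplit := Summable.sum_add_tsum_nat_add (f := g) (M + 1) hgsum
    have hhead : (∑ i ∈ Finset.range (M + 1), g i) ≤ (M + 1) * (C * ((M + 1) * ‖z - w‖)) := by
      calc (∑ i ∈ Finset.range (M + 1), g i)
          ≤ ∑ _i ∈ Finset.range (M + 1), C * ((M + 1) * ‖z - w‖) := by
            refine Finset.sum_le_sum fun i hi => ?_
            have hi' : (i : ℝ) ≤ (M + 1 : ℝ) := by
              have := Finset.mem_range.mp hi
              exact_mod_cast this.le
            calc g i ≤ C * ‖z ^ i - w ^ i‖ := by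
                  refine mul_le_mul_of_nonneg_right (hQle n i) (norm_nonneg _)
              _ ≤ C * ((i : ℝ) * ‖z - w‖) := by
                  refine mul_le_mul_of_nonneg_left (aux_pow_sub_pow hz hw i) hC0
              _ ≤ C * ((M + 1 : ℝ) * ‖z - w‖) := by
                  refine mul_le_mul_of_nonneg_left
                    (mul_le_mul_of_nonneg_right hi' (norm_nonneg _)) hC0
        _ = (M + 1) * (C * ((M + 1) * ‖z - w‖)) := by
            rw [Finset.sum_const, Finset.card_range]
            push_cast
            ring
    have htl : (∑' i, g (i + (M + 1))) ≤ 2 * ∑' i, |Q n (i + M + 1)| := by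
      have hs3 : Summable fun i => g (i + (M + 1)) :=
        (summable_nat_add_iff (M + 1)).mpr hgsum
      have hs4 : Summable fun i => 2 * |Q n (i + M + 1)| := by
        have : Summable fun i => |Q n (i + (M + 1))| :=
          (summable_nat_add_iff (M + 1)).mpr (hQsum n)
        simpa [← add_assoc] using this.mul_left 2
      rw [← tsum_mul_left]
      refine Summable.tsum_le_tsum (fun i => ?_) hs3 hs4
      have := hg_le (i + (M + 1))
      rwa [← add_assoc] at this
    have hheadlt : (M + 1 : ℝ) * (C * ((M + 1) * ‖z - w‖)) ≤ 1 / 8 := by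
      have h1 : (M + 1 : ℝ) * (C * ((M + 1) * ‖z - w‖))
          = C * (M + 1) ^ 2 * ‖z - w‖ := by ring
      rw [h1]
      have h2 : C * (M + 1 : ℝ) ^ 2 * ‖z - w‖ ≤ (C + 1) * (M + 1) ^ 2 * δ := by
        have hM1 : (0 : ℝ) < (M + 1 : ℝ) ^ 2 := by positivity
        nlinarith [mul_le_mul_of_nonneg_left hzw.le (mul_nonneg hC0 hM1.le),
          mul_nonneg hM1.le hδ0.le, norm_nonneg (z - w)]
      refine h2.trans (le_of_eq ?_)
      have hCne : (C + 1 : ℝ) ≠ 0 := by positivity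
      have hMne : ((M : ℝ) + 1) ≠ 0 := by positivity
      rw [hδdef]
      field_simp
    have htail8 : (∑' i, g (i + (M + 1))) ≤ 1 / 4 := by
      have := htail n
      linarith
    calc ‖H n z - H n w‖ ≤ ∑' i, g i := hbd
      _ = (∑ i ∈ Finset.range (M + 1), g i) + ∑' i, g (i + (M + 1)) := hsplit.symm
      _ ≤ 1 / 8 + 1 / 4 := add_le_add (hhead.trans hheadlt) htail8
      _ < 1 / 2 := by norm_num
  -- locally constant vanishing
  have step : ∀ z w : ℂ, ‖z‖ ≤ 1 → ‖w‖ ≤ 1 → ‖z - w‖ < δ → G w = 0 → G z = 0 := by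
    intro z w hz hw hd hw0
    have hHw : ∀ n, H n w = 0 := by
      intro n
      have := (hroot n).2.2 w hw
      have hpow : (H n w) ^ (n + 1) = 0 := by rw [hHdef]; rw [this]; exact hw0
      exact pow_eq_zero_iff (Nat.succ_ne_zero n) |>.mp hpow
    have hGz : ∀ n : ℕ, ‖G z‖ ≤ (1 / 2 : ℝ) ^ (n + 1) := by
      intro n
      have hz2 : ‖H n z‖ < 1 / 2 := by
        have := key n z w hz hw hd
        rwa [hHw n, sub_zero] at this
      have := (hroot n).2.2 z hz
      rw [hGdef]
      calc ‖∑' i, (p i : ℂ) * z ^ i‖ = ‖(H n z) ^ (n + 1)‖ := by rw [← this]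
        _ = ‖H n z‖ ^ (n + 1) := norm_pow _ _
        _ ≤ (1 / 2 : ℝ) ^ (n + 1) := pow_le_pow_left₀ (norm_nonneg _) hz2.le _
    have h0 : Tendsto (fun n : ℕ => (1 / 2 : ℝ) ^ (n + 1)) atTop (nhds 0) := by
      have := tendsto_pow_atTop_nhds_zero_of_lt_one
        (by norm_num : (0:ℝ) ≤ 1 / 2) (by norm_num : (1/2:ℝ) < 1)
      exact this.comp (tendsto_add_atTop_nat 1)
    have : ‖G z‖ ≤ 0 := ge_of_tendsto h0 (Eventually.of_forall hGz)
    have : ‖G z‖ = 0 := le_antisymm this (norm_nonneg _)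
    exact norm_eq_zero.mp this
  -- G 1 = 1
  have hpsum : Summable p := by
    by_contra h
    rw [tsum_eq_zero_of_not_summable h] at hp1
    norm_num at hp1
  have hG1 : G 1 = 1 := by
    rw [hGdef]
    simp only [one_pow, mul_one]
    rw [← Complex.ofReal_tsum]
    rw [hp1, Complex.ofReal_one]
  -- chain from z₀ to 1
  obtain ⟨K, hK⟩ := exists_nat_gt (2 / δ)
  have hK0 : (0 : ℝ) < K := lt_trans (by positivity) hK
  have hKne : (K : ℂ) ≠ 0 := by
    simp only [ne_eq, Nat.cast_eq_zero]
    exact_mod_cast (by exact_mod_cast hK0.ne' : (K:ℝ) ≠ 0)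
  set f : ℕ → ℂ := fun k => z₀ + ((k : ℂ) / (K : ℂ)) * (1 - z₀) with hfdef
  have hmem : ∀ k, k ≤ K → ‖f k‖ ≤ 1 := by
    intro k hk
    set t : ℝ := (k : ℝ) / (K : ℝ) with htdef
    have ht0 : 0 ≤ t := by positivity
    have ht1 : t ≤ 1 := by
      rw [htdef, div_le_one hK0]
      exact_mod_cast hk
    have hf : f k = ((1 - t : ℝ) : ℂ) * z₀ + ((t : ℝ) : ℂ) := by
      rw [hfdef, htdef]
      push_cast
      ring
    rw [hf]
    calc ‖((1 - t : ℝ) : ℂ) * z₀ + ((t : ℝ) : ℂ)‖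
        ≤ ‖((1 - t : ℝ) : ℂ) * z₀‖ + ‖((t : ℝ) : ℂ)‖ := norm_add_le _ _
      _ = |1 - t| * ‖z₀‖ + |t| := by
          rw [norm_mul, Complex.norm_real, Complex.norm_real,
            Real.norm_eq_abs, Real.norm_eq_abs]
      _ = (1 - t) * ‖z₀‖ + t := by
          rw [abs_of_nonneg (by linarith), abs_of_nonneg ht0]
      _ ≤ (1 - t) * 1 + t := by
          have : (0:ℝ) ≤ 1 - t := by linarith
          nlinarith [norm_nonneg z₀]
      _ = 1 := by ring
  have hstepdist : ∀ k : ℕ, ‖f (k + 1) - f k‖ < δ := by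
    intro k
    have hdiff : f (k + 1) - f k = (1 / (K : ℂ)) * (1 - z₀) := by
      rw [hfdef]
      push_cast
      field_simp
      ring
    rw [hdiff, norm_mul]
    have h1 : ‖(1 : ℂ) / (K : ℂ)‖ = 1 / (K : ℝ) := by
      rw [norm_div, norm_one]
      congr 1
      exact_mod_cast Complex.norm_natCast K
    have h2 : ‖1 - z₀‖ ≤ 2 := by
      calc ‖1 - z₀‖ ≤ ‖(1 : ℂ)‖ + ‖z₀‖ := norm_sub_le _ _
        _ ≤ 1 + 1 := by rw [norm_one]; linarith
        _ = 2 := by norm_num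
    rw [h1]
    calc 1 / (K : ℝ) * ‖1 - z₀‖ ≤ 1 / (K : ℝ) * 2 := by
          gcongr
      _ = 2 / (K : ℝ) := by ring
      _ < δ := by
          rw [div_lt_iff₀ hK0]
          rw [div_lt_iff₀ hδ0] at hK
          linarith [hK]
  have hzero : ∀ k, k ≤ K → G (f k) = 0 := by
    intro k
    induction k with
    | zero =>
      intro _
      have hf0 : f 0 = z₀ := by rw [hfdef]; simp
      rw [hf0]; exact hG0
    | succ m ih =>
      intro hm
      have hm' : m ≤ K := Nat.le_of_succ_le hm
      exact step (f (m + 1)) (f m) (hmem (m + 1) hm) (hmem m hm') (hstepdist m) (ih hm')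
  have hfK : f K = 1 := by
    rw [hfdef]
    field_simp
    ring
  have := hzero K le_rfl
  rw [hfK, hG1] at this
  exact one_ne_zero this
end

section
/- Lemma 2.4 (Continuity theorem for signed p.g.f.'s): Let (p^{(n)})_{n≥1} be sequences p^{(n)} : ℕ → ℝ with sup_n Σ_{k=0}^∞ |p^{(n)}_k| < ∞ and lim_{M→∞} sup_n Σ_{k>M} |p^{(n)}_k| = 0. Then there exists a sequence p : ℕ → ℝ such that lim_{n→∞} p^{(n)}_k = p_k for every k ∈ ℕ if and only if the limit lim_{n→∞} Σ_{k=0}^∞ p^{(n)}_k z^k exists for every z ∈ (0,1). Moreover, in that case Σ_{k=0}^∞ |p_k| < ∞ and, with G(z) = Σ_{k=0}^∞ p_k z^k, one has Σ_{k=0}^∞ p_k = 1 if and only if lim_{z→1⁻} G(z) = 1. -/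
open Filter Finset Topology

set_option maxHeartbeats 1000000

private lemma abs_tsum_le' {f : ℕ → ℝ} (hf : Summable fun i => |f i|) :
    |∑' i, f i| ≤ ∑' i, |f i| := by
  have hf' : Summable fun i => ‖f i‖ := by simpa only [Real.norm_eq_abs] using hf
  calc |∑' i, f i| = ‖∑' i, f i‖ := (Real.norm_eq_abs _).symm
    _ ≤ ∑' i, ‖f i‖ := norm_tsum_le_tsum_norm hf'
    _ = ∑' i, |f i| := by simp only [Real.norm_eq_abs]

private lemma pgf_abs_summable {f : ℕ → ℝ} (hf : Summable fun k => |f k|) {z : ℝ}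
    (hz0 : 0 ≤ z) (hz1 : z ≤ 1) : Summable fun k => |f k * z ^ k| := by
  refine hf.of_nonneg_of_le (fun k => abs_nonneg _) fun k => ?_
  rw [abs_mul, abs_pow, abs_of_nonneg hz0]
  calc |f k| * z ^ k ≤ |f k| * 1 :=
        mul_le_mul_of_nonneg_left (pow_le_one₀ hz0 hz1) (abs_nonneg _)
    _ = |f k| := mul_one _

private lemma pgf_summable {f : ℕ → ℝ} (hf : Summable fun k => |f k|) {z : ℝ}
    (hz0 : 0 ≤ z) (hz1 : z ≤ 1) : Summable fun k => f k * z ^ k :=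
  (pgf_abs_summable hf hz0 hz1).of_abs

private lemma tail_tsum_le {f : ℕ → ℝ} (hf : Summable fun k => |f k|) {D : ℝ}
    (hD : (∑' k, |f k|) ≤ D) (M : ℕ) : (∑' j, |f (j + M)|) ≤ D := by
  have h := Summable.sum_add_tsum_nat_add (f := fun k => |f k|) M hf
  have h2 : (0:ℝ) ≤ ∑ i ∈ range M, |f i| := Finset.sum_nonneg fun i _ => abs_nonneg _
  linarith

private lemma tail_bound {f : ℕ → ℝ} (hf : Summable fun k => |f k|) {D : ℝ}
    (hD : (∑' k, |f k|) ≤ D) {z : ℝ} (hz0 : 0 ≤ z) (hz1 : z ≤ 1) (M : ℕ) :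
    |∑' j, f (j + M) * z ^ (j + M)| ≤ z ^ M * D := by
  have hfM : Summable fun j => |f (j + M)| := (summable_nat_add_iff M).2 hf
  have habs : Summable fun j => |f (j + M) * z ^ (j + M)| := by
    refine hfM.of_nonneg_of_le (fun j => abs_nonneg _) fun j => ?_
    rw [abs_mul, abs_pow, abs_of_nonneg hz0]
    calc |f (j + M)| * z ^ (j + M) ≤ |f (j + M)| * 1 :=
          mul_le_mul_of_nonneg_left (pow_le_one₀ hz0 hz1) (abs_nonneg _)
      _ = |f (j + M)| := mul_one _
  calc |∑' j, f (j + M) * z ^ (j + M)| ≤ ∑' j, |f (j + M) * z ^ (j + M)| := abs_tsum_le' habs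
    _ ≤ ∑' j, |f (j + M)| * z ^ M := by
        refine Summable.tsum_le_tsum (fun j => ?_) habs (hfM.mul_right _)
        rw [abs_mul, abs_pow, abs_of_nonneg hz0]
        exact mul_le_mul_of_nonneg_left (pow_le_pow_of_le_one hz0 hz1 (Nat.le_add_left M j))
          (abs_nonneg _)
    _ = (∑' j, |f (j + M)|) * z ^ M := by rw [tsum_mul_right]
    _ ≤ D * z ^ M := mul_le_mul_of_nonneg_right (tail_tsum_le hf hD M) (pow_nonneg hz0 M)
    _ = z ^ M * D := mul_comm _ _

private lemma limit_summable {P : ℕ → ℕ → ℝ} {C : ℝ}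
    (hsummable : ∀ n, Summable fun k => |P n k|)
    (hC : ∀ n, (∑' k, |P n k|) ≤ C) {p : ℕ → ℝ}
    (hp : ∀ k, Tendsto (fun n => P n k) atTop (𝓝 (p k))) :
    Summable (fun k => |p k|) ∧ (∑' k, |p k|) ≤ C := by
  have hsum : ∀ M : ℕ, (∑ k ∈ range M, |p k|) ≤ C := by
    intro M
    have h1 : Tendsto (fun n => ∑ k ∈ range M, |P n k|) atTop (𝓝 (∑ k ∈ range M, |p k|)) :=
      tendsto_finset_sum _ fun k _ => (hp k).abs
    refine le_of_tendsto h1 (Eventually.of_forall fun n => ?_)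
    exact le_trans (Summable.sum_le_tsum (range M) (fun i _ => abs_nonneg _) (hsummable n)) (hC n)
  have hS : Summable fun k => |p k| := summable_of_sum_range_le (fun k => abs_nonneg _) hsum
  exact ⟨hS, Summable.tsum_le_of_sum_range_le hS hsum⟩

private lemma pgf_tendsto {P : ℕ → ℕ → ℝ} {C : ℝ}
    (hsummable : ∀ n, Summable fun k => |P n k|)
    (hC : ∀ n, (∑' k, |P n k|) ≤ C) {p : ℕ → ℝ}
    (hp : ∀ k, Tendsto (fun n => P n k) atTop (𝓝 (p k)))
    {z : ℝ} (hz0 : 0 < z) (hz1 : z < 1) :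
    Tendsto (fun n => ∑' k, P n k * z ^ k) atTop (𝓝 (∑' k, p k * z ^ k)) := by
  obtain ⟨hpS, hpC⟩ := limit_summable hsummable hC hp
  have hC0 : 0 ≤ C := le_trans (tsum_nonneg fun k => abs_nonneg _) (hC 0)
  rw [Metric.tendsto_atTop]
  intro ε hε
  obtain ⟨M, hM⟩ : ∃ M : ℕ, 2 * C * z ^ M < ε / 2 := by
    have h := tendsto_pow_atTop_nhds_zero_of_lt_one hz0.le hz1
    have h2 : Tendsto (fun M : ℕ => 2 * C * z ^ M) atTop (𝓝 0) := by
      simpa using h.const_mul (2 * C)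
    have := (h2.eventually (eventually_lt_nhds (by linarith : (0:ℝ) < ε / 2))).exists
    exact this
  have hhead : Tendsto (fun n => ∑ k ∈ range M, |P n k - p k| * z ^ k) atTop (𝓝 0) := by
    have h0 : ∀ k, Tendsto (fun n => |P n k - p k| * z ^ k) atTop (𝓝 0) := by
      intro k
      have : Tendsto (fun n => P n k - p k) atTop (𝓝 0) := by
        simpa using (hp k).sub_const (p k)
      simpa using (this.abs.mul_const (z ^ k))
    have := tendsto_finset_sum (range M) (fun k _ => h0 k)
    simpa using this
  obtain ⟨N, hN⟩ := (Metric.tendsto_atTop.mp hhead) (ε / 2) (by linarith)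
  refine ⟨N, fun n hn => ?_⟩
  have hsn : Summable fun k => P n k * z ^ k := pgf_summable (hsummable n) hz0.le hz1.le
  have hsp : Summable fun k => p k * z ^ k := pgf_summable hpS hz0.le hz1.le
  have hdecn := Summable.sum_add_tsum_nat_add (f := fun k => P n k * z ^ k) M hsn
  have hdecp := Summable.sum_add_tsum_nat_add (f := fun k => p k * z ^ k) M hsp
  have htailn : |∑' j, P n (j + M) * z ^ (j + M)| ≤ z ^ M * C :=
    tail_bound (hsummable n) (hC n) hz0.le hz1.le M
  have htailp : |∑' j, p (j + M) * z ^ (j + M)| ≤ z ^ M * C :=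
    tail_bound hpS hpC hz0.le hz1.le M
  have hheadn : |∑ k ∈ range M, (P n k * z ^ k - p k * z ^ k)| < ε / 2 := by
    have h1 := hN n hn
    rw [Real.dist_eq, sub_zero] at h1
    calc |∑ k ∈ range M, (P n k * z ^ k - p k * z ^ k)|
        ≤ ∑ k ∈ range M, |P n k * z ^ k - p k * z ^ k| := Finset.abs_sum_le_sum_abs _ _
      _ = ∑ k ∈ range M, |P n k - p k| * z ^ k := by
          refine Finset.sum_congr rfl fun k _ => ?_
          rw [← sub_mul, abs_mul, abs_pow, abs_of_nonneg hz0.le]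
      _ ≤ |∑ k ∈ range M, |P n k - p k| * z ^ k| := le_abs_self _
      _ < ε / 2 := h1
  rw [Real.dist_eq]
  have key : (∑' k, P n k * z ^ k) - (∑' k, p k * z ^ k)
      = (∑ k ∈ range M, (P n k * z ^ k - p k * z ^ k))
        + ((∑' j, P n (j + M) * z ^ (j + M)) - (∑' j, p (j + M) * z ^ (j + M))) := by
    rw [Finset.sum_sub_distrib]
    linarith [hdecn, hdecp]
  rw [key]
  set A := ∑ k ∈ range M, (P n k * z ^ k - p k * z ^ k) with hA
  set B := ∑' j, P n (j + M) * z ^ (j + M) with hB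
  set Bp := ∑' j, p (j + M) * z ^ (j + M) with hBp
  have h6 : |A + (B - Bp)| ≤ |A| + (|B| + |Bp|) :=
    le_trans (abs_add_le _ _) (by linarith [abs_sub B Bp])
  have h7 : z ^ M * C + z ^ M * C = 2 * C * z ^ M := by ring
  linarith [h6, hheadn, htailn, htailp, hM]

private lemma coeff_tendsto {P : ℕ → ℕ → ℝ} {C : ℝ}
    (hsummable : ∀ n, Summable fun k => |P n k|)
    (hC : ∀ n, (∑' k, |P n k|) ≤ C)
    (h : ∀ z : ℝ, 0 < z → z < 1 →
      ∃ L : ℝ, Tendsto (fun n => ∑' k, P n k * z ^ k) atTop (𝓝 L)) :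
    ∀ k, ∃ L, Tendsto (fun n => P n k) atTop (𝓝 L) := by
  have hC0 : 0 ≤ C := le_trans (tsum_nonneg fun k => abs_nonneg _) (hC 0)
  intro k
  induction k using Nat.strong_induction_on with
  | _ k IH =>
  have hex : ∃ q : ℕ → ℝ, ∀ j < k, Tendsto (fun n => P n j) atTop (𝓝 (q j)) := by
    choose L hL using IH
    exact ⟨fun j => if hj : j < k then L j hj else 0,
      fun j hj => by simpa [hj] using hL j hj⟩
  obtain ⟨q, hq⟩ := hex
  suffices hc : CauchySeq fun n => P n k from cauchySeq_tendsto_of_complete hc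
  rw [Metric.cauchySeq_iff]
  intro ε hε
  set z : ℝ := min (1/2) (ε / (4 * (C + 1))) with hzdef
  have hz0 : 0 < z := lt_min (by norm_num) (div_pos hε (by linarith))
  have hz1 : z < 1 := lt_of_le_of_lt (min_le_left _ _) (by norm_num)
  have hzC : 2 * C * z ≤ ε / 2 := by
    have h1 : z ≤ ε / (4 * (C + 1)) := min_le_right _ _
    have h2 : 0 < 4 * (C + 1) := by linarith
    rw [le_div_iff₀ h2] at h1
    nlinarith [hz0.le]
  -- the shifted pgf converges
  have hRconv : ∃ L, Tendsto (fun n => ∑' j, P n (j + k) * z ^ (j + k)) atTop (𝓝 L) := by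
    obtain ⟨L0, hL0⟩ := h z hz0 hz1
    refine ⟨L0 - ∑ j ∈ range k, q j * z ^ j, ?_⟩
    have hhead : Tendsto (fun n => ∑ j ∈ range k, P n j * z ^ j) atTop
        (𝓝 (∑ j ∈ range k, q j * z ^ j)) :=
      tendsto_finset_sum _ fun j hj => (hq j (mem_range.mp hj)).mul_const _
    have heq : ∀ n, (∑' j, P n (j + k) * z ^ (j + k))
        = (∑' m, P n m * z ^ m) - ∑ j ∈ range k, P n j * z ^ j := by
      intro n
      have := Summable.sum_add_tsum_nat_add (f := fun m => P n m * z ^ m) k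
        (pgf_summable (hsummable n) hz0.le hz1.le)
      linarith
    exact (hL0.sub hhead).congr fun n => (heq n).symm
  obtain ⟨L, hL⟩ := hRconv
  have hcR : CauchySeq fun n => ∑' j, P n (j + k) * z ^ (j + k) := hL.cauchySeq
  have hzk : 0 < z ^ k := pow_pos hz0 k
  obtain ⟨N, hN⟩ := (Metric.cauchySeq_iff.mp hcR) ((ε / 2) * z ^ k) (by positivity)
  refine ⟨N, fun n hn m hm => ?_⟩
  -- decompose R i = P i k * z^k + T i
  have hdec : ∀ i, (∑' j, P i (j + k) * z ^ (j + k))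
      = P i k * z ^ k + ∑' j, P i (j + (k + 1)) * z ^ (j + (k + 1)) := by
    intro i
    have hs : Summable fun j => P i (j + k) * z ^ (j + k) := by
      apply Summable.of_abs
      refine ((summable_nat_add_iff k).2 (hsummable i)).of_nonneg_of_le
        (fun j => abs_nonneg _) fun j => ?_
      rw [abs_mul, abs_pow, abs_of_nonneg hz0.le]
      exact (mul_le_mul_of_nonneg_left (pow_le_one₀ hz0.le hz1.le) (abs_nonneg _)).trans_eq
        (mul_one _)
    have h1 := Summable.sum_add_tsum_nat_add (f := fun j => P i (j + k) * z ^ (j + k)) 1 hs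
    have h2 : (∑ j ∈ range 1, P i (j + k) * z ^ (j + k)) = P i k * z ^ k := by
      simp
    have h3 : (∑' j, P i (j + 1 + k) * z ^ (j + 1 + k))
        = ∑' j, P i (j + (k + 1)) * z ^ (j + (k + 1)) :=
      tsum_congr fun j => by rw [show j + 1 + k = j + (k + 1) by omega]
    rw [h2, h3] at h1
    linarith
  have hT : ∀ i, |∑' j, P i (j + (k + 1)) * z ^ (j + (k + 1))| ≤ z ^ (k + 1) * C :=
    fun i => tail_bound (hsummable i) (hC i) hz0.le hz1.le (k + 1)
  have hRd := hN n hn m hm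
  rw [Real.dist_eq] at hRd
  rw [Real.dist_eq]
  have key : |P n k - P m k| * z ^ k < ε * z ^ k := by
    have h1 : (P n k - P m k) * z ^ k
        = ((∑' j, P n (j + k) * z ^ (j + k)) - (∑' j, P m (j + k) * z ^ (j + k)))
          - ((∑' j, P n (j + (k + 1)) * z ^ (j + (k + 1)))
            - (∑' j, P m (j + (k + 1)) * z ^ (j + (k + 1)))) := by
      rw [hdec n, hdec m]; ring
    have h2 : |P n k - P m k| * z ^ k = |(P n k - P m k) * z ^ k| := by
      rw [abs_mul, abs_pow, abs_of_nonneg hz0.le]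
    rw [h2, h1]
    calc |_ - _| ≤ |(∑' j, P n (j + k) * z ^ (j + k)) - (∑' j, P m (j + k) * z ^ (j + k))|
          + |(∑' j, P n (j + (k + 1)) * z ^ (j + (k + 1)))
            - (∑' j, P m (j + (k + 1)) * z ^ (j + (k + 1)))| := abs_sub _ _
      _ < (ε / 2) * z ^ k + (z ^ (k + 1) * C + z ^ (k + 1) * C) := by
          have h3 := abs_sub (∑' j, P n (j + (k + 1)) * z ^ (j + (k + 1)))
            (∑' j, P m (j + (k + 1)) * z ^ (j + (k + 1)))
          have h4 := hT n
          have h5 := hT m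
          linarith
      _ ≤ (ε / 2) * z ^ k + (ε / 2) * z ^ k := by
          have : z ^ (k + 1) * C + z ^ (k + 1) * C = (2 * C * z) * z ^ k := by ring
          rw [this]
          have := mul_le_mul_of_nonneg_right hzC hzk.le
          linarith
      _ = ε * z ^ k := by ring
  exact lt_of_mul_lt_mul_right (by linarith [key]) hzk.le

/-- Lemma 2.4 (continuity theorem for signed p.g.f.'s): for a family of
bounded signed point measures on ℕ, bounded in variation and uniformly tight,
pointwise convergence of the coefficients is equivalent to convergence of the
signed p.g.f.'s on (0,1); moreover the limit is absolutely summable and its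
total mass is 1 iff the limiting p.g.f. tends to 1 as z ↑ 1. -/
theorem continuity_theorem_signed_pgf
    (P : ℕ → ℕ → ℝ)
    (hsummable : ∀ n, Summable (fun k => |P n k|))
    (hbound : ∃ C : ℝ, ∀ n, (∑' k, |P n k|) ≤ C)
    (htight : Filter.Tendsto (fun M : ℕ => ⨆ n, ∑' k, |P n (k + M + 1)|)
      Filter.atTop (nhds 0)) :
    ((∃ p : ℕ → ℝ, ∀ k, Filter.Tendsto (fun n => P n k) Filter.atTop (nhds (p k))) ↔
      (∀ z : ℝ, 0 < z → z < 1 →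
        ∃ L : ℝ, Filter.Tendsto (fun n => ∑' k, P n k * z ^ k)
          Filter.atTop (nhds L))) ∧
    (∀ p : ℕ → ℝ,
      (∀ k, Filter.Tendsto (fun n => P n k) Filter.atTop (nhds (p k))) →
      Summable (fun k => |p k|) ∧
      ((∑' k, p k) = 1 ↔
        Filter.Tendsto (fun z : ℝ => ∑' k, p k * z ^ k)
          (nhdsWithin 1 (Set.Iio 1)) (nhds 1))) := by
  obtain ⟨C, hC⟩ := hbound
  constructor
  · constructor
    · rintro ⟨p, hp⟩ z hz0 hz1
      exact ⟨∑' k, p k * z ^ k, pgf_tendsto hsummable hC hp hz0 hz1⟩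
    · intro h
      have := coeff_tendsto hsummable hC h
      choose p hp using this
      exact ⟨p, hp⟩
  · intro p hp
    obtain ⟨hpS, hpC⟩ := limit_summable hsummable hC hp
    refine ⟨hpS, ?_⟩
    have habel : Tendsto (fun z : ℝ => ∑' k, p k * z ^ k)
        (𝓝[<] (1:ℝ)) (𝓝 (∑' k, p k)) :=
      Real.tendsto_tsum_powerSeries_nhdsWithin_lt hpS.of_abs.hasSum.tendsto_sum_nat
    constructor
    · intro h1; rw [h1] at habel; exact habel
    · intro h1; exact tendsto_nhds_unique habel h1
end

section
/- Lemma 3.1 (Continuity theorem for signed characteristic functions on ℤ): Let (μ^{(n)})_{n≥1} be sequences μ^{(n)} : ℤ → ℂ with sup_n Σ_{k∈ℤ} |μ^{(n)}_k| < ∞ and lim_{M→∞} sup_n Σ_{|k|>M} |μ^{(n)}_k| = 0. Suppose the functions φ_n(θ) = Σ_{k∈ℤ} μ^{(n)}_k e^{ikθ} converge, for (Lebesgue) almost every θ ∈ ℝ, to a function g(θ). Then there exists μ : ℤ → ℂ with Σ_{k∈ℤ} |μ_k| < ∞ such that μ^{(n)}_k → μ_k as n → ∞ for every k ∈ ℤ,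 and g(θ) = Σ_{k∈ℤ} μ_k e^{ikθ} for almost every θ ∈ ℝ. -/
open MeasureTheory Filter

private lemma orth_exp (m : ℤ) :
    ∫ θ : ℝ in Set.Ioc (0:ℝ) (2*Real.pi), Complex.exp (Complex.I * (m:ℂ) * (θ:ℂ)) =
      if m = 0 then (2*Real.pi : ℂ) else 0 := by
  have h2 : (0:ℝ) ≤ 2*Real.pi := by positivity
  rw [← intervalIntegral.integral_of_le h2]
  by_cases hm : m = 0
  · simp [hm]
  · have hc : Complex.I * (m:ℂ) ≠ 0 :=
      mul_ne_zero Complex.I_ne_zero (by exact_mod_cast hm)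
    rw [if_neg hm, intervalIntegral.integral_congr (g := fun θ : ℝ =>
      Complex.exp ((Complex.I * (m:ℂ)) * (θ:ℂ))) (fun θ _ => by ring_nf),
      integral_exp_mul_complex hc]
    have h1 : (Complex.I * m) * ((2*Real.pi : ℝ):ℂ) = (m:ℂ) * (2 * (Real.pi:ℂ) * Complex.I) := by
      push_cast; ring
    rw [h1, Complex.exp_int_mul_two_pi_mul_I]
    simp

private lemma norm_exp_I_mul (m : ℤ) (θ : ℝ) :
    ‖Complex.exp (Complex.I * (m:ℂ) * (θ:ℂ))‖ = 1 := by
  simp [Complex.norm_exp]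

private lemma coef_formula (c : ℤ → ℂ) (hc : Summable fun k => ‖c k‖) (j : ℤ) :
    ∫ θ : ℝ in Set.Ioc (0:ℝ) (2*Real.pi),
      (∑' k : ℤ, c k * Complex.exp (Complex.I * (k:ℂ) * (θ:ℂ))) *
        Complex.exp (Complex.I * ((-j : ℤ):ℂ) * (θ:ℂ)) = c j * (2*Real.pi : ℂ) := by
  have hcont : ∀ m : ℤ, Continuous fun θ : ℝ => Complex.exp (Complex.I * (m:ℂ) * (θ:ℂ)) := by
    intro m; fun_prop
  have hstep : ∀ θ : ℝ,
      (∑' k : ℤ, c k * Complex.exp (Complex.I * (k:ℂ) * (θ:ℂ))) *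
        Complex.exp (Complex.I * ((-j : ℤ):ℂ) * (θ:ℂ)) =
      ∑' k : ℤ, c k * Complex.exp (Complex.I * ((k - j : ℤ):ℂ) * (θ:ℂ)) := by
    intro θ
    rw [← tsum_mul_right]
    refine tsum_congr fun k => ?_
    rw [mul_assoc, ← Complex.exp_add]
    congr 1
    push_cast
    ring
  simp only [hstep]
  have hInt : ∀ k : ℤ, Integrable
      (fun θ : ℝ => c k * Complex.exp (Complex.I * ((k - j : ℤ):ℂ) * (θ:ℂ)))
      (volume.restrict (Set.Ioc (0:ℝ) (2*Real.pi))) :=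
    fun k => (Continuous.integrableOn_Ioc (by fun_prop))
  have hNorm : ∀ k : ℤ, (∫ θ : ℝ in Set.Ioc (0:ℝ) (2*Real.pi),
      ‖c k * Complex.exp (Complex.I * ((k - j : ℤ):ℂ) * (θ:ℂ))‖) = (2*Real.pi) * ‖c k‖ := by
    intro k
    have : ∀ θ : ℝ, ‖c k * Complex.exp (Complex.I * ((k - j : ℤ):ℂ) * (θ:ℂ))‖ = ‖c k‖ := by
      intro θ; rw [norm_mul, norm_exp_I_mul, mul_one]
    simp only [this]
    rw [setIntegral_const, Real.volume_real_Ioc, smul_eq_mul]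
    rw [max_eq_left (by linarith [Real.pi_pos])]
    ring
  rw [← integral_tsum_of_summable_integral_norm hInt (by
      simp only [hNorm]; exact hc.mul_left _)]
  have hval : ∀ k : ℤ, (∫ θ : ℝ in Set.Ioc (0:ℝ) (2*Real.pi),
      c k * Complex.exp (Complex.I * ((k - j : ℤ):ℂ) * (θ:ℂ)))
      = if k = j then c j * (2*Real.pi : ℂ) else 0 := by
    intro k
    rw [integral_const_mul, orth_exp]
    by_cases hk : k = j
    · simp [hk]
    · rw [if_neg (sub_ne_zero.mpr hk), if_neg hk, mul_zero]
  simp only [hval]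
  exact tsum_ite_eq j _


/-- Lemma 3.1 (continuity theorem for signed characteristic functions on ℤ):
if a family of bounded complex point measures on ℤ is bounded in variation and
uniformly tight and its characteristic functions converge a.e. to `g`, then
the coefficients converge to those of a bounded complex point measure whose
characteristic function agrees a.e. with `g`. -/
theorem continuity_theorem_signed_charfun
    (μs : ℕ → ℤ → ℂ)
    (hsummable : ∀ n, Summable (fun k => ‖μs n k‖))
    (hbound : ∃ C : ℝ, ∀ n, (∑' k : ℤ, ‖μs n k‖) ≤ C)
    (htight : Filter.Tendsto
      (fun M : ℕ => ⨆ n, ∑' k : ℤ, if (M : ℤ) < |k| then ‖μs n k‖ else 0)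
      Filter.atTop (nhds 0))
    (g : ℝ → ℂ)
    (hconv : ∀ᵐ θ : ℝ ∂MeasureTheory.volume,
      Filter.Tendsto
        (fun n => ∑' k : ℤ, μs n k * Complex.exp (Complex.I * (k : ℂ) * (θ : ℂ)))
        Filter.atTop (nhds (g θ))) :
    ∃ μ : ℤ → ℂ, Summable (fun k => ‖μ k‖) ∧
      (∀ k : ℤ, Filter.Tendsto (fun n => μs n k) Filter.atTop (nhds (μ k))) ∧
      (∀ᵐ θ : ℝ ∂MeasureTheory.volume,
        g θ = ∑' k : ℤ, μ k * Complex.exp (Complex.I * (k : ℂ) * (θ : ℂ))) := by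
  obtain ⟨C, hC⟩ := hbound
  set φ : ℕ → ℝ → ℂ := fun n θ => ∑' k : ℤ, μs n k * Complex.exp (Complex.I * (k:ℂ) * (θ:ℂ))
    with hφ_def
  set ν : Measure ℝ := volume.restrict (Set.Ioc (0:ℝ) (2*Real.pi)) with hν_def
  have hterm_norm : ∀ (c : ℤ → ℂ) (k : ℤ) (θ : ℝ),
      ‖c k * Complex.exp (Complex.I * (k:ℂ) * (θ:ℂ))‖ = ‖c k‖ := by
    intro c k θ; rw [norm_mul, norm_exp_I_mul, mul_one]
  -- uniform bound on φ
  have hφ_bound : ∀ n θ, ‖φ n θ‖ ≤ C := by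
    intro n θ
    calc ‖φ n θ‖ ≤ ∑' k : ℤ, ‖μs n k * Complex.exp (Complex.I * (k:ℂ) * (θ:ℂ))‖ := by
          apply norm_tsum_le_tsum_norm
          simpa only [hterm_norm] using hsummable n
      _ = ∑' k : ℤ, ‖μs n k‖ := tsum_congr fun k => hterm_norm _ k θ
      _ ≤ C := hC n
  have hφ_cont : ∀ n, Continuous (φ n) := by
    intro n
    apply continuous_tsum (fun k => by fun_prop) (hsummable n)
    intro k θ; rw [hterm_norm]
  -- convergence of coefficients
  set μ : ℤ → ℂ := fun j => ((2*Real.pi : ℂ))⁻¹ *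
    ∫ θ : ℝ, g θ * Complex.exp (Complex.I * ((-j : ℤ):ℂ) * (θ:ℂ)) ∂ν with hμ_def
  have h2pi : (2*Real.pi : ℂ) ≠ 0 := by
    simp only [ne_eq, Complex.ofReal_ne_zero]
    exact_mod_cast (by positivity : (0:ℝ) < 2*Real.pi).ne'
  have hconvν : ∀ᵐ θ ∂ν, Tendsto (fun n => φ n θ) atTop (nhds (g θ)) :=
    ae_restrict_of_ae hconv
  have hgmeas : AEStronglyMeasurable g ν :=
    aestronglyMeasurable_of_tendsto_ae atTop
      (fun n => (hφ_cont n).aestronglyMeasurable) hconvν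
  have hcoef : ∀ j : ℤ, Tendsto (fun n => μs n j) atTop (nhds (μ j)) := by
    intro j
    have hdct : Tendsto
        (fun n => ∫ θ : ℝ, φ n θ * Complex.exp (Complex.I * ((-j : ℤ):ℂ) * (θ:ℂ)) ∂ν)
        atTop (nhds (∫ θ : ℝ, g θ * Complex.exp (Complex.I * ((-j : ℤ):ℂ) * (θ:ℂ)) ∂ν)) := by
      refine tendsto_integral_of_dominated_convergence (fun _ => C)
        (fun n => ((hφ_cont n).mul (by fun_prop)).aestronglyMeasurable)
        ?_ (fun n => ae_of_all _ fun θ => ?_) ?_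
      · exact integrable_const C
      · rw [norm_mul, norm_exp_I_mul, mul_one]; exact hφ_bound n θ
      · filter_upwards [hconvν] with θ hθ
        exact hθ.mul_const _
    have hform : ∀ n, (∫ θ : ℝ, φ n θ * Complex.exp (Complex.I * ((-j : ℤ):ℂ) * (θ:ℂ)) ∂ν)
        = μs n j * (2*Real.pi : ℂ) := by
      intro n
      exact coef_formula (μs n) (hsummable n) j
    simp only [hform] at hdct
    have := hdct.const_mul ((2*Real.pi : ℂ))⁻¹
    rw [hμ_def]
    refine Tendsto.congr (fun n => ?_) this
    field_simp
  -- summability of the limit coefficients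
  have hμsum : Summable fun k => ‖μ k‖ := by
    refine summable_of_sum_le (c := C) (fun k => norm_nonneg _) fun u => ?_
    have hlim : Tendsto (fun n => ∑ k ∈ u, ‖μs n k‖) atTop (nhds (∑ k ∈ u, ‖μ k‖)) :=
      tendsto_finset_sum u fun k _ => (hcoef k).norm
    refine le_of_tendsto hlim (Eventually.of_forall fun n => ?_)
    exact le_trans (Summable.sum_le_tsum u (fun k _ => norm_nonneg _) (hsummable n)) (hC n)
  -- tails
  set T : ℕ → ℕ → ℝ := fun n M => ∑' k : ℤ, if (M:ℤ) < |k| then ‖μs n k‖ else 0 with hT_def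
  have hTsum : ∀ n (M : ℕ), Summable fun k : ℤ => if (M:ℤ) < |k| then ‖μs n k‖ else 0 := by
    intro n M
    refine Summable.of_nonneg_of_le (fun k => ?_) (fun k => ?_) (hsummable n) <;>
      by_cases h : (M:ℤ) < |k| <;> simp [h]
  have hTle : ∀ n (M : ℕ), T n M ≤ C := fun n M =>
    le_trans (Summable.tsum_le_tsum (fun k => by by_cases h : (M:ℤ) < |k| <;> simp [h])
      (hTsum n M) (hsummable n)) (hC n)
  set S : ℕ → ℝ := fun M => ⨆ n, T n M with hS_def
  have hTS : ∀ n (M : ℕ), T n M ≤ S M := fun n M =>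
    le_ciSup ⟨C, by rintro x ⟨m, rfl⟩; exact hTle m M⟩ n
  have htight' : Tendsto S atTop (nhds 0) := htight
  have hμtail : ∀ M : ℕ, (∑' k : ℤ, if (M:ℤ) < |k| then ‖μ k‖ else 0) ≤ S M := by
    intro M
    have hs2 : Summable fun k : ℤ => if (M:ℤ) < |k| then ‖μ k‖ else 0 := by
      refine Summable.of_nonneg_of_le (fun k => ?_) (fun k => ?_) hμsum <;>
        by_cases h : (M:ℤ) < |k| <;> simp [h]
    refine Summable.tsum_le_of_sum_le hs2 fun u => ?_
    have hlim : Tendsto (fun n => ∑ k ∈ u, if (M:ℤ) < |k| then ‖μs n k‖ else 0) atTop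
        (nhds (∑ k ∈ u, if (M:ℤ) < |k| then ‖μ k‖ else 0)) := by
      refine tendsto_finset_sum u fun k _ => ?_
      by_cases h : (M:ℤ) < |k|
      · simpa [h] using (hcoef k).norm
      · simp [h]
    refine le_of_tendsto hlim (Eventually.of_forall fun n => ?_)
    exact le_trans (Summable.sum_le_tsum u (fun k _ => by by_cases h : (M:ℤ) < |k| <;> simp [h])
      (hTsum n M)) (hTS n M)
  -- pointwise convergence of characteristic functions everywhere
  have hterm_summ : ∀ (c : ℤ → ℂ), (Summable fun k => ‖c k‖) → ∀ θ : ℝ,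
      Summable fun k : ℤ => c k * Complex.exp (Complex.I * (k:ℂ) * (θ:ℂ)) := by
    intro c hc θ
    apply Summable.of_norm
    simpa only [hterm_norm] using hc
  have hpt : ∀ θ : ℝ, Tendsto (fun n => φ n θ) atTop
      (nhds (∑' k : ℤ, μ k * Complex.exp (Complex.I * (k:ℂ) * (θ:ℂ)))) := by
    intro θ
    rw [Metric.tendsto_atTop]
    intro ε hε
    have hε3 : 0 < ε/3 := by linarith
    obtain ⟨M, hM⟩ := (htight'.eventually_lt_const hε3).exists
    set s : Finset ℤ := Finset.Icc (-(M:ℤ)) (M:ℤ) with hs_def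
    have hks : ∀ k : ℤ, (k ∈ s) ↔ ¬ ((M:ℤ) < |k|) := by
      intro k; rw [hs_def, Finset.mem_Icc, ← abs_le, not_lt]
    have hfin : ∀ᶠ n in atTop, (∑ k ∈ s, ‖μs n k - μ k‖) < ε/3 := by
      have hl : Tendsto (fun n => ∑ k ∈ s, ‖μs n k - μ k‖) atTop
          (nhds (∑ _k ∈ s, (0:ℝ))) := by
        refine tendsto_finset_sum s fun k _ => ?_
        have h0 := ((hcoef k).sub (tendsto_const_nhds (x := μ k))).norm
        simpa using h0
      simp only [Finset.sum_const, smul_zero] at hl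
      exact hl.eventually_lt_const hε3
    rw [eventually_atTop] at hfin
    obtain ⟨N, hN⟩ := hfin
    refine ⟨N, fun n hn => ?_⟩
    have hdiff_summ : Summable fun k : ℤ => ‖μs n k - μ k‖ :=
      Summable.of_nonneg_of_le (fun k => norm_nonneg _)
        (fun k => norm_sub_le _ _) ((hsummable n).add hμsum)
    have hsub : φ n θ - (∑' k : ℤ, μ k * Complex.exp (Complex.I * (k:ℂ) * (θ:ℂ)))
        = ∑' k : ℤ, (μs n k - μ k) * Complex.exp (Complex.I * (k:ℂ) * (θ:ℂ)) := by
      rw [hφ_def]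
      rw [← Summable.tsum_sub (hterm_summ _ (hsummable n) θ) (hterm_summ _ hμsum θ)]
      exact tsum_congr fun k => by ring
    have hnorm1 : ‖φ n θ - (∑' k : ℤ, μ k * Complex.exp (Complex.I * (k:ℂ) * (θ:ℂ)))‖
        ≤ ∑' k : ℤ, ‖μs n k - μ k‖ := by
      rw [hsub]
      calc ‖∑' k : ℤ, (μs n k - μ k) * Complex.exp (Complex.I * (k:ℂ) * (θ:ℂ))‖
          ≤ ∑' k : ℤ, ‖(μs n k - μ k) * Complex.exp (Complex.I * (k:ℂ) * (θ:ℂ))‖ := by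
            apply norm_tsum_le_tsum_norm
            simpa only [hterm_norm (fun k => μs n k - μ k)] using hdiff_summ
        _ = ∑' k : ℤ, ‖μs n k - μ k‖ :=
            tsum_congr fun k => hterm_norm (fun k => μs n k - μ k) k θ
    have hsplit : (∑' k : ℤ, ‖μs n k - μ k‖)
        = (∑ k ∈ s, ‖μs n k - μ k‖) + ∑' k : ↥((s : Set ℤ)ᶜ), ‖μs n ↑k - μ ↑k‖ :=
      (Summable.sum_add_tsum_compl (s := s) hdiff_summ).symm
    have hcompl_eq : ∀ (c : ℤ → ℂ), (Summable fun k => ‖c k‖) →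
        (∑' k : ↥((s : Set ℤ)ᶜ), ‖c ↑k‖) = ∑' k : ℤ, if (M:ℤ) < |k| then ‖c k‖ else 0 := by
      intro c hc
      rw [tsum_subtype ((s : Set ℤ)ᶜ) (fun k => ‖c k‖)]
      refine tsum_congr fun k => ?_
      by_cases h : (M:ℤ) < |k|
      · rw [Set.indicator_of_mem (by simpa [hks k] using h), if_pos h]
      · rw [Set.indicator_of_notMem (by simpa [hks k] using h), if_neg h]
    have hcompl : (∑' k : ↥((s : Set ℤ)ᶜ), ‖μs n ↑k - μ ↑k‖)
        ≤ T n M + ∑' k : ℤ, if (M:ℤ) < |k| then ‖μ k‖ else 0 := by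
      calc (∑' k : ↥((s : Set ℤ)ᶜ), ‖μs n ↑k - μ ↑k‖)
          ≤ ∑' k : ↥((s : Set ℤ)ᶜ), (‖μs n ↑k‖ + ‖μ ↑k‖) := by
            refine Summable.tsum_le_tsum (fun k => norm_sub_le _ _) (hdiff_summ.subtype _) ?_
            exact ((hsummable n).add hμsum).subtype _
        _ = (∑' k : ↥((s : Set ℤ)ᶜ), ‖μs n ↑k‖) + ∑' k : ↥((s : Set ℤ)ᶜ), ‖μ ↑k‖ :=
            Summable.tsum_add ((hsummable n).subtype _) (hμsum.subtype _)
        _ = T n M + ∑' k : ℤ, if (M:ℤ) < |k| then ‖μ k‖ else 0 := by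
            rw [hcompl_eq _ (hsummable n), hcompl_eq _ hμsum]
    have htail2 : (∑' k : ℤ, if (M:ℤ) < |k| then ‖μ k‖ else 0) ≤ S M := hμtail M
    have hfinal : dist (φ n θ) (∑' k : ℤ, μ k * Complex.exp (Complex.I * (k:ℂ) * (θ:ℂ))) < ε := by
      rw [dist_eq_norm]
      have h1 := hN n hn
      have h2 := hTS n M
      calc ‖φ n θ - (∑' k : ℤ, μ k * Complex.exp (Complex.I * (k:ℂ) * (θ:ℂ)))‖
          ≤ ∑' k : ℤ, ‖μs n k - μ k‖ := hnorm1
        _ = (∑ k ∈ s, ‖μs n k - μ k‖) + ∑' k : ↥((s : Set ℤ)ᶜ), ‖μs n ↑k - μ ↑k‖ := hsplit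
        _ ≤ (∑ k ∈ s, ‖μs n k - μ k‖) +
            (T n M + ∑' k : ℤ, if (M:ℤ) < |k| then ‖μ k‖ else 0) := by linarith [hcompl]
        _ < ε := by linarith
    exact hfinal
  refine ⟨μ, hμsum, hcoef, ?_⟩
  filter_upwards [hconv] with θ hθ
  exact tendsto_nhds_unique hθ (hpt θ)
end

section
/- Lemma 3.2: Let p : ℤ → ℝ with p_k ≥ 0 and Σ_{k∈ℤ} p_k = 1, and let φ(θ) = Σ_{k∈ℤ} p_k e^{ikθ} for θ ∈ ℝ. Suppose that for every integer n ≥ 1 there exists q^{(n)} : ℤ → ℝ with Σ_{k∈ℤ} q^{(n)}_k = 1 and Σ_{k∈ℤ} |q^{(n)}_k| < ∞ such that (Σ_{k∈ℤ} q^{(n)}_k e^{ikθ})^n = φ(θ) for all θ ∈ ℝ, and suppose sup_n Σ_k |q^{(n)}_k| < ∞ and lim_{M→∞} sup_n Σ_{|k|>M} |q^{(n)}_k| = 0. Then φ(θ) ≠ 0 for all θ ∈ ℝ. -/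
open Complex

lemma normE (k : ℤ) (θ : ℝ) : ‖Complex.exp (Complex.I * (k : ℂ) * (θ : ℂ))‖ = 1 := by
  have h : Complex.I * (k : ℂ) * (θ : ℂ) = ((k * θ : ℝ) : ℂ) * Complex.I := by
    push_cast; ring
  rw [h]
  simpa using Complex.norm_exp_ofReal_mul_I (k * θ)

lemma Ediff (k : ℤ) (θ θ' : ℝ) :
    ‖Complex.exp (Complex.I * (k : ℂ) * (θ : ℂ)) - Complex.exp (Complex.I * (k : ℂ) * (θ' : ℂ))‖
      ≤ 2 * |(k : ℝ)| * |θ - θ'| := by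
  have h1 : Complex.I * (k : ℂ) * (θ : ℂ) = ((k * θ : ℝ) : ℂ) * Complex.I := by push_cast; ring
  have h2 : Complex.I * (k : ℂ) * (θ' : ℂ) = ((k * θ' : ℝ) : ℂ) * Complex.I := by push_cast; ring
  rw [h1, h2]
  set a := (k : ℝ) * θ
  set b := (k : ℝ) * θ'
  have key : Complex.exp (a * Complex.I) - Complex.exp (b * Complex.I)
      = Complex.exp (b * Complex.I) * (Complex.exp (((a - b : ℝ) : ℂ) * Complex.I) - 1) := by
    rw [mul_sub, mul_one, ← Complex.exp_add]
    push_cast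
    ring_nf
  rw [key, norm_mul]
  have hb : ‖Complex.exp ((b : ℂ) * Complex.I)‖ = 1 := by
    simpa using Complex.norm_exp_ofReal_mul_I b
  rw [hb, one_mul]
  have habs : ∀ t : ℝ, ‖Complex.exp ((t : ℂ) * Complex.I) - 1‖ ≤ 2 * |t| := by
    intro t
    by_cases ht : |t| ≤ 1
    · have := Complex.norm_exp_sub_one_le (x := (t : ℂ) * Complex.I) (by simpa using ht)
      simpa using this
    · have h2' : ‖Complex.exp ((t : ℂ) * Complex.I) - 1‖ ≤ 2 := by
        calc ‖Complex.exp ((t : ℂ) * Complex.I) - 1‖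
            ≤ ‖Complex.exp ((t : ℂ) * Complex.I)‖ + ‖(1 : ℂ)‖ := norm_sub_le _ _
          _ = 2 := by
              have := Complex.norm_exp_ofReal_mul_I t
              rw [this]; simp; norm_num
      have : (2 : ℝ) ≤ 2 * |t| := by nlinarith [le_of_not_ge ht]
      linarith
  calc ‖Complex.exp (((a - b : ℝ) : ℂ) * Complex.I) - 1‖ ≤ 2 * |a - b| := habs _
    _ = 2 * |(k : ℝ)| * |θ - θ'| := by rw [show a - b = (k : ℝ) * (θ - θ') by ring, abs_mul]; ring
/-- Lemma 3.2: the characteristic function of a signed integer-valued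
infinitely divisible distribution (whose family of signed n-th roots
`Q n = q^{(n+1)}` is bounded in variation and uniformly tight) never
vanishes. -/
theorem signed_integer_valued_infinitely_divisible_charfun_ne_zero
    (p : ℤ → ℝ) (hp : ∀ k, 0 ≤ p k) (hp1 : (∑' k : ℤ, p k) = 1)
    (Q : ℕ → ℤ → ℝ)
    (hroot : ∀ n : ℕ, (∑' k : ℤ, Q n k) = 1 ∧ Summable (fun k => |Q n k|) ∧
      ∀ θ : ℝ,
        (∑' k : ℤ, (Q n k : ℂ) * Complex.exp (Complex.I * (k : ℂ) * (θ : ℂ))) ^ (n + 1)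
          = ∑' k : ℤ, (p k : ℂ) * Complex.exp (Complex.I * (k : ℂ) * (θ : ℂ)))
    (hbound : ∃ C : ℝ, ∀ n, (∑' k : ℤ, |Q n k|) ≤ C)
    (htight : Filter.Tendsto
      (fun M : ℕ => ⨆ n, ∑' k : ℤ, if (M : ℤ) < |k| then |Q n k| else 0)
      Filter.atTop (nhds 0)) :
    ∀ θ : ℝ,
      (∑' k : ℤ, (p k : ℂ) * Complex.exp (Complex.I * (k : ℂ) * (θ : ℂ))) ≠ 0 := by
  obtain ⟨C, hC⟩ := hbound
  set C₁ : ℝ := max C 1 with hC₁def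
  have hC₁pos : (0 : ℝ) < C₁ := lt_of_lt_of_le one_pos (le_max_right _ _)
  have hQsum : ∀ n, Summable (fun k => |Q n k|) := fun n => (hroot n).2.1
  have hQle : ∀ n, (∑' k : ℤ, |Q n k|) ≤ C₁ := fun n => (hC n).trans (le_max_left _ _)
  have hps : Summable p := by
    by_contra h
    rw [tsum_eq_zero_of_not_summable h] at hp1; norm_num at hp1
  set f : ℝ → ℂ := fun θ => ∑' k : ℤ, (p k : ℂ) * Complex.exp (Complex.I * (k : ℂ) * (θ : ℂ))
    with hfdef
  set g : ℕ → ℝ → ℂ :=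
    fun n θ => ∑' k : ℤ, (Q n k : ℂ) * Complex.exp (Complex.I * (k : ℂ) * (θ : ℂ)) with hgdef
  show ∀ θ, f θ ≠ 0
  intro θ₀ h0
  -- summability of the complex series
  have hsumf : ∀ θ : ℝ,
      Summable (fun k : ℤ => (p k : ℂ) * Complex.exp (Complex.I * (k : ℂ) * (θ : ℂ))) := by
    intro θ
    apply Summable.of_norm
    have : (fun k : ℤ => ‖(p k : ℂ) * Complex.exp (Complex.I * (k : ℂ) * (θ : ℂ))‖) = p := by
      funext k
      rw [norm_mul, normE, mul_one]
      simp [_root_.abs_of_nonneg (hp k)]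
    rw [this]; exact hps
  have hsumg : ∀ n (θ : ℝ),
      Summable (fun k : ℤ => (Q n k : ℂ) * Complex.exp (Complex.I * (k : ℂ) * (θ : ℂ))) := by
    intro n θ
    apply Summable.of_norm
    have : (fun k : ℤ => ‖(Q n k : ℂ) * Complex.exp (Complex.I * (k : ℂ) * (θ : ℂ))‖)
        = fun k => |Q n k| := by
      funext k
      rw [norm_mul, normE, mul_one]
      simp
    rw [this]; exact hQsum n
  -- continuity of f
  have hfcont : Continuous f := by
    apply continuous_tsum (u := p)
    · intro k; fun_prop
    · exact hps
    · intro k θ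
      rw [norm_mul, normE, mul_one]
      simp [_root_.abs_of_nonneg (hp k)]
  set S : Set ℝ := {θ | f θ = 0} with hSdef
  have hclosed : IsClosed S := isClosed_eq hfcont continuous_const
  -- tail summability
  have htailsum : ∀ n (M : ℕ),
      Summable (fun k : ℤ => if (M : ℤ) < |k| then |Q n k| else 0) := by
    intro n M
    apply Summable.of_nonneg_of_le _ _ (hQsum n)
    · intro k; split <;> simp [abs_nonneg]
    · intro k; split <;> simp [abs_nonneg]
  have htail_le_C₁ : ∀ n (M : ℕ),
      (∑' k : ℤ, if (M : ℤ) < |k| then |Q n k| else 0) ≤ C₁ := by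
    intro n M
    refine le_trans ((htailsum n M).tsum_le_tsum ?_ (hQsum n)) (hQle n)
    intro k; split <;> simp [abs_nonneg]
  have hopen : IsOpen S := by
    rw [Metric.isOpen_iff]
    intro θ₁ hθ₁
    obtain ⟨N, hN⟩ := (Metric.tendsto_atTop.mp htight) (1 / 8) (by norm_num)
    have hsup : (⨆ n, ∑' k : ℤ, if (N : ℤ) < |k| then |Q n k| else 0) < 1 / 8 := by
      have := hN N le_rfl
      rw [Real.dist_eq, sub_zero] at this
      exact lt_of_le_of_lt (le_abs_self _) this
    have hbdd : BddAbove (Set.range fun n => ∑' k : ℤ, if (N : ℤ) < |k| then |Q n k| else 0) := by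
      refine ⟨C₁, ?_⟩
      rintro x ⟨n, rfl⟩
      exact htail_le_C₁ n N
    have htail_lt : ∀ n, (∑' k : ℤ, if (N : ℤ) < |k| then |Q n k| else 0) < 1 / 8 :=
      fun n => lt_of_le_of_lt (le_ciSup hbdd n) hsup
    set δ : ℝ := (8 * ((N : ℝ) + 1) * C₁)⁻¹ with hδdef
    have h8pos : (0 : ℝ) < 8 * ((N : ℝ) + 1) * C₁ := by positivity
    have hδpos : 0 < δ := by positivity
    have hδeq : δ * (8 * ((N : ℝ) + 1) * C₁) = 1 := inv_mul_cancel₀ (ne_of_gt h8pos)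
    refine ⟨δ, hδpos, ?_⟩
    intro θ hθ
    have hd : |θ - θ₁| ≤ δ := by
      rw [← Real.dist_eq]
      exact le_of_lt (Metric.mem_ball.mp hθ)
    have hgz : ∀ n, g n θ₁ = 0 := by
      intro n
      have h := (hroot n).2.2 θ₁
      have : g n θ₁ ^ (n + 1) = 0 := by rw [hgdef]; rw [h]; exact hθ₁
      exact pow_eq_zero_iff (Nat.succ_ne_zero n) |>.mp this
    have key : ∀ n, ‖g n θ‖ ≤ 1 / 2 := by
      intro n
      set b : ℤ → ℝ := fun k =>
        2 * (N : ℝ) * δ * |Q n k| + 2 * (if (N : ℤ) < |k| then |Q n k| else 0) with hbdef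
      have hbsum : Summable b := ((hQsum n).mul_left _).add ((htailsum n N).mul_left 2)
      have hptwise : ∀ k : ℤ,
          ‖(Q n k : ℂ) * (Complex.exp (Complex.I * (k : ℂ) * (θ : ℂ))
            - Complex.exp (Complex.I * (k : ℂ) * (θ₁ : ℂ)))‖ ≤ b k := by
        intro k
        rw [norm_mul]
        have hQabs : ‖(Q n k : ℂ)‖ = |Q n k| := by simp
        rw [hQabs]
        by_cases hk : (N : ℤ) < |k|
        · have hE2 : ‖Complex.exp (Complex.I * (k : ℂ) * (θ : ℂ))
              - Complex.exp (Complex.I * (k : ℂ) * (θ₁ : ℂ))‖ ≤ 2 := by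
            refine le_trans (norm_sub_le _ _) ?_
            rw [normE, normE]; norm_num
          have h1 : |Q n k| * ‖Complex.exp (Complex.I * (k : ℂ) * (θ : ℂ))
              - Complex.exp (Complex.I * (k : ℂ) * (θ₁ : ℂ))‖ ≤ |Q n k| * 2 :=
            mul_le_mul_of_nonneg_left hE2 (abs_nonneg _)
          have h2 : (0 : ℝ) ≤ 2 * (N : ℝ) * δ * |Q n k| := by positivity
          rw [hbdef]; simp only [if_pos hk]
          linarith
        · have hkN : |(k : ℝ)| ≤ (N : ℝ) := by
            have := not_lt.mp hk
            exact_mod_cast this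
          have hE := Ediff k θ θ₁
          have hNnn : (0 : ℝ) ≤ (N : ℝ) := Nat.cast_nonneg N
          have h2 : 2 * |(k : ℝ)| * |θ - θ₁| ≤ 2 * (N : ℝ) * δ := by
            have := mul_le_mul hkN hd (abs_nonneg _) hNnn
            nlinarith
          have h3 : |Q n k| * ‖Complex.exp (Complex.I * (k : ℂ) * (θ : ℂ))
              - Complex.exp (Complex.I * (k : ℂ) * (θ₁ : ℂ))‖ ≤ |Q n k| * (2 * (N : ℝ) * δ) :=
            mul_le_mul_of_nonneg_left (hE.trans h2) (abs_nonneg _)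
          rw [hbdef]; simp only [if_neg hk]
          linarith [h3]
      have hnormsum : Summable (fun k : ℤ =>
          ‖(Q n k : ℂ) * (Complex.exp (Complex.I * (k : ℂ) * (θ : ℂ))
            - Complex.exp (Complex.I * (k : ℂ) * (θ₁ : ℂ)))‖) :=
        Summable.of_nonneg_of_le (fun k => norm_nonneg _) hptwise hbsum
      have hsub : g n θ - g n θ₁ = ∑' k : ℤ, (Q n k : ℂ) *
          (Complex.exp (Complex.I * (k : ℂ) * (θ : ℂ))
            - Complex.exp (Complex.I * (k : ℂ) * (θ₁ : ℂ))) := by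
        rw [hgdef]
        simp only
        rw [← Summable.tsum_sub (hsumg n θ) (hsumg n θ₁)]
        congr 1
        funext k
        ring
      have hstep1 : ‖g n θ - g n θ₁‖ ≤ ∑' k : ℤ, b k := by
        rw [hsub]
        refine le_trans (norm_tsum_le_tsum_norm hnormsum) ?_
        exact hnormsum.tsum_le_tsum hptwise hbsum
      have hbtsum : (∑' k : ℤ, b k)
          = 2 * (N : ℝ) * δ * (∑' k : ℤ, |Q n k|)
            + 2 * (∑' k : ℤ, if (N : ℤ) < |k| then |Q n k| else 0) := by
        rw [hbdef]
        rw [Summable.tsum_add ((hQsum n).mul_left _) ((htailsum n N).mul_left 2)]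
        rw [tsum_mul_left, tsum_mul_left]
      have hpart1 : 2 * (N : ℝ) * δ * (∑' k : ℤ, |Q n k|) ≤ 1 / 4 := by
        have h1 : 2 * (N : ℝ) * δ * (∑' k : ℤ, |Q n k|) ≤ 2 * (N : ℝ) * δ * C₁ := by
          have : (0 : ℝ) ≤ 2 * (N : ℝ) * δ := by positivity
          exact mul_le_mul_of_nonneg_left (hQle n) this
        nlinarith [hδpos.le, hC₁pos.le, mul_nonneg hδpos.le hC₁pos.le]
      have hpart2 : 2 * (∑' k : ℤ, if (N : ℤ) < |k| then |Q n k| else 0) ≤ 1 / 4 := by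
        linarith [htail_lt n]
      have : ‖g n θ - g n θ₁‖ ≤ 1 / 2 := by
        rw [hbtsum] at hstep1
        linarith
      calc ‖g n θ‖ = ‖g n θ - g n θ₁‖ := by rw [hgz n, sub_zero]
        _ ≤ 1 / 2 := this
    have hfθ : ∀ n : ℕ, ‖f θ‖ ≤ (1 / 2 : ℝ) ^ (n + 1) := by
      intro n
      have h := (hroot n).2.2 θ
      have hfg : f θ = g n θ ^ (n + 1) := by rw [hgdef, hfdef]; exact h.symm
      calc ‖f θ‖ = ‖g n θ‖ ^ (n + 1) := by rw [hfg, norm_pow]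
        _ ≤ (1 / 2 : ℝ) ^ (n + 1) := pow_le_pow_left₀ (norm_nonneg _) (key n) _
    have htend : Filter.Tendsto (fun n : ℕ => (1 / 2 : ℝ) ^ (n + 1)) Filter.atTop (nhds 0) := by
      have h0 : Filter.Tendsto (fun n : ℕ => (1 / 2 : ℝ) ^ n) Filter.atTop (nhds 0) :=
        tendsto_pow_atTop_nhds_zero_of_lt_one (by norm_num) (by norm_num)
      exact h0.comp (Filter.tendsto_add_atTop_nat 1)
    have hle0 : ‖f θ‖ ≤ 0 := ge_of_tendsto' htend hfθ
    exact norm_le_zero_iff.mp hle0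
  have hSuniv : S = Set.univ := IsClopen.eq_univ ⟨hclosed, hopen⟩ ⟨θ₀, h0⟩
  have h0mem : f 0 = 0 := by
    have : (0 : ℝ) ∈ S := hSuniv ▸ Set.mem_univ 0
    exact this
  have hf0 : f 0 = 1 := by
    rw [hfdef]
    simp only [Complex.ofReal_zero, mul_zero, Complex.exp_zero, mul_one]
    rw [← Complex.ofReal_tsum, hp1, Complex.ofReal_one]
  rw [hf0] at h0mem
  exact one_ne_zero h0mem
end

section
/- Theorem 3.1 (sufficiency): Let p : ℤ → ℝ with p_k ≥ 0 and Σ_{k∈ℤ} p_k = 1 be IPCP, i.e. there exist λ > 0 and α : ℤ → ℝ with α_0 = 0, Σ_{k∈ℤ} α_k = 1 and Σ_{k∈ℤ} |α_k| < ∞ such that Σ_{k∈ℤ} p_k e^{ikθ} = exp(λ Σ_{k∈ℤ} α_k (e^{ikθ} − 1)) for all θ ∈ ℝ. Then p is signed integer-valued infinitely divisible: for every integer n ≥ 1 there exists q^{(n)} : ℤ → ℝ with Σ_{k∈ℤ} q^{(n)}_k = 1 and Σ_{k∈ℤ} |q^{(n)}_k| < ∞ such that (Σ_{k∈ℤ}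 q^{(n)}_k e^{ikθ})^n = Σ_{k∈ℤ} p_k e^{ikθ} for all θ ∈ ℝ. -/
namespace IPCP31

noncomputable def E (θ : ℝ) (k : ℤ) : ℂ := Complex.exp (Complex.I * (k : ℂ) * (θ : ℂ))

lemma E_norm (θ : ℝ) (k : ℤ) : ‖E θ k‖ = 1 := by
  rw [E, Complex.norm_exp]
  have : (Complex.I * (k : ℂ) * (θ : ℂ)).re = 0 := by simp
  rw [this, Real.exp_zero]

lemma E_add (θ : ℝ) (j i : ℤ) : E θ (j + i) = E θ j * E θ i := by
  rw [E, E, E, ← Complex.exp_add]; congr 1; push_cast; ring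

lemma E_zero (θ : ℝ) : E θ 0 = 1 := by simp [E]

def σ : ℤ × ℤ ≃ ℤ × ℤ where
  toFun x := (x.1 + x.2, x.1)
  invFun y := (y.2, y.1 - y.2)
  left_inv x := by simp
  right_inv y := by simp

noncomputable def conv (f g : ℤ → ℝ) (k : ℤ) : ℝ := ∑' j, f j * g (k - j)

noncomputable def cpow (f : ℤ → ℝ) : ℕ → ℤ → ℝ
  | 0 => fun k => if k = 0 then 1 else 0
  | m + 1 => conv f (cpow f m)

section conv

variable {f g : ℤ → ℝ}

/-- summability of the diagonalized product for nonneg summable functions -/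
lemma prod_summable_nonneg (hf0 : ∀ k, 0 ≤ f k) (hg0 : ∀ k, 0 ≤ g k)
    (hf : Summable f) (hg : Summable g) :
    Summable (fun x : ℤ × ℤ => f x.2 * g (x.1 - x.2)) := by
  have hprod : Summable (fun x : ℤ × ℤ => f x.1 * g x.2) :=
    hf.mul_of_nonneg hg (fun k => hf0 k) (fun k => hg0 k)
  have := (σ.symm.summable_iff (f := fun x : ℤ × ℤ => f x.1 * g x.2)).2 hprod
  convert this using 1
  rfl

lemma conv_fiber_summable_nonneg (hf0 : ∀ k, 0 ≤ f k) (hg0 : ∀ k, 0 ≤ g k)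
    (hf : Summable f) (hg : Summable g) (k : ℤ) :
    Summable (fun j => f j * g (k - j)) :=
  (prod_summable_nonneg hf0 hg0 hf hg).prod_factor k

lemma conv_summable_nonneg (hf0 : ∀ k, 0 ≤ f k) (hg0 : ∀ k, 0 ≤ g k)
    (hf : Summable f) (hg : Summable g) :
    Summable (conv f g) :=
  (prod_summable_nonneg hf0 hg0 hf hg).prod

lemma conv_tsum_nonneg (hf0 : ∀ k, 0 ≤ f k) (hg0 : ∀ k, 0 ≤ g k)
    (hf : Summable f) (hg : Summable g) :
    (∑' k, conv f g k) = (∑' k, f k) * (∑' k, g k) := by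
  have hprod : Summable (fun x : ℤ × ℤ => f x.1 * g x.2) :=
    hf.mul_of_nonneg hg (fun k => hf0 k) (fun k => hg0 k)
  have h2 := prod_summable_nonneg hf0 hg0 hf hg
  have e1 : (∑' k, conv f g k) = ∑' x : ℤ × ℤ, f x.2 * g (x.1 - x.2) :=
    (Summable.tsum_prod' h2 (fun k => h2.prod_factor k)).symm
  have e2 : (∑' x : ℤ × ℤ, f x.2 * g (x.1 - x.2)) = ∑' x : ℤ × ℤ, f x.1 * g x.2 := by
    have := σ.symm.tsum_eq (f := fun x : ℤ × ℤ => f x.1 * g x.2)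
    rw [← this]; rfl
  rw [e1, e2, Summable.tsum_prod' hprod (fun k => hprod.prod_factor k)]
  simp_rw [tsum_mul_left, tsum_mul_right]

lemma conv_fiber_summable (hf : Summable (fun k => |f k|)) (hg : Summable (fun k => |g k|))
    (k : ℤ) : Summable (fun j => f j * g (k - j)) := by
  apply Summable.of_abs
  have h := conv_fiber_summable_nonneg (f := fun k => |f k|) (g := fun k => |g k|)
    (fun k => abs_nonneg _) (fun k => abs_nonneg _) hf hg k
  simpa [abs_mul] using h

lemma conv_abs_le (hf : Summable (fun k => |f k|)) (hg : Summable (fun k => |g k|)) (k : ℤ) :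
    |conv f g k| ≤ conv (fun j => |f j|) (fun j => |g j|) k := by
  rw [conv, conv]
  have h := conv_fiber_summable_nonneg (f := fun k => |f k|) (g := fun k => |g k|)
    (fun k => abs_nonneg _) (fun k => abs_nonneg _) hf hg k
  have hb := norm_tsum_le_tsum_norm (f := fun j => f j * g (k - j)) (by simpa [abs_mul] using h)
  simpa [abs_mul] using hb

end conv

end IPCP31

namespace IPCP31

variable {f g : ℤ → ℝ}

lemma conv_coe (k : ℤ) : ((conv f g k : ℝ) : ℂ) = ∑' j, (f j : ℂ) * (g (k - j) : ℂ) := by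
  rw [conv, Complex.ofReal_tsum]
  exact tsum_congr fun j => by push_cast; ring

lemma norm_coe_mul_E (θ : ℝ) (r : ℝ) (k : ℤ) : ‖(r : ℂ) * E θ k‖ = |r| := by
  rw [norm_mul, E_norm, Complex.norm_real, Real.norm_eq_abs, mul_one]

lemma conv_char (hf : Summable (fun k => |f k|)) (hg : Summable (fun k => |g k|)) (θ : ℝ) :
    (∑' k, ((conv f g k : ℝ) : ℂ) * E θ k)
      = (∑' j, (f j : ℂ) * E θ j) * (∑' i, (g i : ℂ) * E θ i) := by
  have hfn : Summable (fun j => ‖(f j : ℂ) * E θ j‖) := by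
    simpa only [norm_coe_mul_E] using hf
  have hgn : Summable (fun j => ‖(g j : ℂ) * E θ j‖) := by
    simpa only [norm_coe_mul_E] using hg
  have habs : Summable (fun x : ℤ × ℤ => |f x.2| * |g (x.1 - x.2)|) :=
    prod_summable_nonneg (f := fun k => |f k|) (g := fun k => |g k|)
      (fun k => abs_nonneg _) (fun k => abs_nonneg _) hf hg
  have hψ : Summable (fun x : ℤ × ℤ => (f x.2 : ℂ) * (g (x.1 - x.2) : ℂ) * E θ x.1) := by
    apply Summable.of_norm
    have hfun : (fun x : ℤ × ℤ => ‖(f x.2 : ℂ) * (g (x.1 - x.2) : ℂ) * E θ x.1‖)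
        = fun x : ℤ × ℤ => |f x.2| * |g (x.1 - x.2)| := by
      funext x
      rw [norm_mul, norm_mul, E_norm, mul_one, Complex.norm_real, Complex.norm_real,
        Real.norm_eq_abs, Real.norm_eq_abs]
    rw [hfun]; exact habs
  rw [tsum_mul_tsum_of_summable_norm hfn hgn]
  have key : (∑' x : ℤ × ℤ, ((f x.1 : ℂ) * E θ x.1) * ((g x.2 : ℂ) * E θ x.2))
      = ∑' x : ℤ × ℤ, (f x.2 : ℂ) * (g (x.1 - x.2) : ℂ) * E θ x.1 := by
    rw [← σ.symm.tsum_eq (f := fun x : ℤ × ℤ => ((f x.1 : ℂ) * E θ x.1) * ((g x.2 : ℂ) * E θ x.2))]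
    apply tsum_congr
    intro y
    show ((f y.2 : ℂ) * E θ y.2) * ((g (y.1 - y.2) : ℂ) * E θ (y.1 - y.2)) = _
    rw [show y.1 = y.2 + (y.1 - y.2) by ring, E_add]
    ring_nf
  rw [key, Summable.tsum_prod' hψ (fun k => hψ.prod_factor k)]
  apply tsum_congr
  intro k
  rw [conv_coe, ← tsum_mul_right]

end IPCP31

namespace IPCP31

variable {α : ℤ → ℝ}

lemma cpow_facts (hαabs : Summable (fun k => |α k|)) (m : ℕ) :
    (∀ k, 0 ≤ cpow (fun j => |α j|) m k) ∧ Summable (cpow (fun j => |α j|) m) ∧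
    (∑' k, cpow (fun j => |α j|) m k) = (∑' k, |α k|) ^ m ∧
    (∀ k, |cpow α m k| ≤ cpow (fun j => |α j|) m k) := by
  induction m with
  | zero =>
    refine ⟨fun k => ?_, ?_, ?_, fun k => ?_⟩
    · show (0:ℝ) ≤ if k = 0 then 1 else 0
      split <;> norm_num
    · exact (hasSum_ite_eq (0:ℤ) (1:ℝ)).summable
    · show (∑' k : ℤ, if k = 0 then (1:ℝ) else 0) = _
      rw [tsum_ite_eq, pow_zero]
    · show |if k = 0 then (1:ℝ) else 0| ≤ if k = 0 then 1 else 0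
      split <;> norm_num
  | succ m ih =>
    obtain ⟨h0, hs, ht, hle⟩ := ih
    have habs0 : ∀ k : ℤ, 0 ≤ |α k| := fun k => abs_nonneg _
    have hsum_abs_cpow : Summable (fun k => |cpow α m k|) :=
      Summable.of_nonneg_of_le (fun k => abs_nonneg _) hle hs
    refine ⟨fun k => ?_, ?_, ?_, fun k => ?_⟩
    · exact tsum_nonneg fun j => mul_nonneg (abs_nonneg _) (h0 _)
    · exact conv_summable_nonneg (f := fun j => |α j|) (g := cpow (fun j => |α j|) m)
        habs0 (fun k => h0 k) hαabs hs
    · rw [show cpow (fun j => |α j|) (m+1) = conv (fun j => |α j|) (cpow (fun j => |α j|) m)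
        from rfl,
        conv_tsum_nonneg habs0 (fun k => h0 k) hαabs hs, ht, pow_succ']
    · have h1 : |cpow α (m+1) k| ≤ conv (fun j => |α j|) (fun j => |cpow α m j|) k :=
        conv_abs_le hαabs hsum_abs_cpow k
    
      refine h1.trans ?_
      unfold conv
      refine Summable.tsum_le_tsum (fun j => ?_) ?_ ?_
      · exact mul_le_mul_of_nonneg_left (hle _) (abs_nonneg _)
      · exact conv_fiber_summable_nonneg (f := fun j => |α j|) (g := fun j => |cpow α m j|)
          habs0 (fun k => abs_nonneg _) hαabs hsum_abs_cpow k
      · exact conv_fiber_summable_nonneg (f := fun j => |α j|) (g := cpow (fun j => |α j|) m)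
          habs0 (fun k => h0 k) hαabs hs k

lemma cpow_char (hαabs : Summable (fun k => |α k|)) (θ : ℝ) (m : ℕ) :
    (∑' k, ((cpow α m k : ℝ) : ℂ) * E θ k) = (∑' k, ((α k : ℝ) : ℂ) * E θ k) ^ m := by
  induction m with
  | zero =>
    rw [pow_zero]
    have h1 : (∑' k : ℤ, ((cpow α 0 k : ℝ) : ℂ) * E θ k)
        = ((cpow α 0 0 : ℝ) : ℂ) * E θ 0 := by
      refine tsum_eq_single 0 (fun k hk => ?_)
      show ((if k = 0 then (1:ℝ) else 0 : ℝ) : ℂ) * E θ k = 0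
      rw [if_neg hk]; simp
    rw [h1, E_zero]
    show ((if (0:ℤ) = 0 then (1:ℝ) else 0 : ℝ) : ℂ) * 1 = 1
    simp
  | succ m ih =>
    have hsum_abs_cpow : Summable (fun k => |cpow α m k|) :=
      Summable.of_nonneg_of_le (fun k => abs_nonneg _) (cpow_facts hαabs m).2.2.2
        (cpow_facts hαabs m).2.1
    rw [show cpow α (m+1) = conv α (cpow α m) from rfl,
      conv_char hαabs hsum_abs_cpow θ, ih, pow_succ']

end IPCP31

lemma IPCP31.cexp_tsum (z : ℂ) : (∑' m : ℕ, z ^ m / (m.factorial : ℂ)) = Complex.exp z := by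
  rw [Complex.exp_eq_exp_ℂ, NormedSpace.exp_eq_tsum_div]

open IPCP31 in
/-- Theorem 3.1 (sufficiency): an integer-valued pseudo compound Poisson
distribution is signed integer-valued infinitely divisible. -/
theorem ipcp_implies_signed_integer_valued_infinitely_divisible
    (p : ℤ → ℝ) (hp : ∀ k, 0 ≤ p k) (hp1 : (∑' k : ℤ, p k) = 1)
    (lam : ℝ) (hlam : 0 < lam) (α : ℤ → ℝ) (hα0 : α 0 = 0)
    (hα1 : (∑' k : ℤ, α k) = 1) (hαabs : Summable (fun k => |α k|))
    (hIPCP : ∀ θ : ℝ,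
      (∑' k : ℤ, (p k : ℂ) * Complex.exp (Complex.I * (k : ℂ) * (θ : ℂ))) =
        Complex.exp ((lam : ℂ) *
          ∑' k : ℤ, (α k : ℂ) * (Complex.exp (Complex.I * (k : ℂ) * (θ : ℂ)) - 1))) :
    ∀ n : ℕ, 1 ≤ n → ∃ q : ℤ → ℝ,
      (∑' k : ℤ, q k) = 1 ∧ Summable (fun k => |q k|) ∧
      ∀ θ : ℝ,
        (∑' k : ℤ, (q k : ℂ) * Complex.exp (Complex.I * (k : ℂ) * (θ : ℂ))) ^ n =
          ∑' k : ℤ, (p k : ℂ) * Complex.exp (Complex.I * (k : ℂ) * (θ : ℂ)) := by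
  intro n hn
  have hnR : (0:ℝ) < (n:ℝ) := by exact_mod_cast Nat.lt_of_lt_of_le Nat.zero_lt_one hn
  set c : ℝ := lam / (n:ℝ) with hcdef
  have hc : 0 < c := div_pos hlam hnR
  set A : ℝ := ∑' k, |α k| with hAdef
  have hA0 : 0 ≤ A := tsum_nonneg fun k => abs_nonneg _
  -- coefficient bounds
  have hcm : ∀ m : ℕ, 0 ≤ c ^ m / (m.factorial : ℝ) := fun m => by positivity
  have hterm : ∀ (m : ℕ) (k : ℤ),
      |c ^ m / (m.factorial : ℝ) * cpow α m k|
        ≤ c ^ m / (m.factorial : ℝ) * cpow (fun j => |α j|) m k := by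
    intro m k
    rw [abs_mul, abs_of_nonneg (hcm m)]
    exact mul_le_mul_of_nonneg_left ((cpow_facts hαabs m).2.2.2 k) (hcm m)
  have hslice : ∀ m : ℕ, Summable (fun k => c ^ m / (m.factorial : ℝ)
      * cpow (fun j => |α j|) m k) :=
    fun m => ((cpow_facts hαabs m).2.1).mul_left _
  have hrow : Summable (fun m : ℕ => c ^ m / (m.factorial : ℝ) * A ^ m) := by
    have : (fun m : ℕ => c ^ m / (m.factorial : ℝ) * A ^ m)
        = fun m : ℕ => (c * A) ^ m / (m.factorial : ℝ) := by
      funext m; rw [mul_pow]; ring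
    rw [this]
    exact Real.summable_pow_div_factorial (c * A)
  have hFprod : Summable (fun x : ℕ × ℤ =>
      c ^ x.1 / (x.1.factorial : ℝ) * cpow (fun j => |α j|) x.1 x.2) := by
    refine (summable_prod_of_nonneg ?_).2 ⟨fun m => hslice m, ?_⟩
    · intro x
      exact mul_nonneg (hcm x.1) ((cpow_facts hαabs x.1).1 x.2)
    · have : (fun m : ℕ => ∑' k : ℤ, c ^ m / (m.factorial : ℝ) * cpow (fun j => |α j|) m k)
          = fun m : ℕ => c ^ m / (m.factorial : ℝ) * A ^ m := by
        funext m
        rw [tsum_mul_left, (cpow_facts hαabs m).2.2.1]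
      rw [this]
      exact hrow
  have hFswap : Summable (fun y : ℤ × ℕ =>
      c ^ y.2 / (y.2.factorial : ℝ) * cpow (fun j => |α j|) y.2 y.1) :=
    (Equiv.prodComm ℤ ℕ).summable_iff.2 hFprod
  have hQa : Summable (fun k : ℤ => ∑' m : ℕ, c ^ m / (m.factorial : ℝ)
      * cpow (fun j => |α j|) m k) := hFswap.prod
  have hfib : ∀ k : ℤ, Summable (fun m : ℕ => c ^ m / (m.factorial : ℝ)
      * cpow (fun j => |α j|) m k) := fun k => hFswap.prod_factor k
  have hfibα : ∀ k : ℤ, Summable (fun m : ℕ => c ^ m / (m.factorial : ℝ) * cpow α m k) :=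
    fun k => Summable.of_abs (Summable.of_nonneg_of_le (fun m => abs_nonneg _)
      (fun m => hterm m k) (hfib k))
  set q : ℤ → ℝ := fun k => Real.exp (-c) * ∑' m : ℕ, c ^ m / (m.factorial : ℝ) * cpow α m k
    with hqdef
  have hq_abs_le : ∀ k, |q k| ≤ Real.exp (-c) * ∑' m : ℕ, c ^ m / (m.factorial : ℝ)
      * cpow (fun j => |α j|) m k := by
    intro k
    rw [hqdef, abs_mul, abs_of_nonneg (Real.exp_nonneg _)]
    refine mul_le_mul_of_nonneg_left ?_ (Real.exp_nonneg _)
    have h1 : |∑' m : ℕ, c ^ m / (m.factorial : ℝ) * cpow α m k|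
        ≤ ∑' m : ℕ, |c ^ m / (m.factorial : ℝ) * cpow α m k| := by
      simpa only [Real.norm_eq_abs] using norm_tsum_le_tsum_norm
        (f := fun m : ℕ => c ^ m / (m.factorial : ℝ) * cpow α m k)
        (by simpa only [Real.norm_eq_abs] using (Summable.of_nonneg_of_le
          (fun m => abs_nonneg _) (fun m => hterm m k) (hfib k)))
    refine h1.trans (Summable.tsum_le_tsum (fun m => hterm m k) ?_ (hfib k))
    exact Summable.of_nonneg_of_le (fun m => abs_nonneg _) (fun m => hterm m k) (hfib k)
  have hq_sum_abs : Summable (fun k => |q k|) :=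
    Summable.of_nonneg_of_le (fun k => abs_nonneg _) hq_abs_le (hQa.mul_left _)
  have hsummableαC : Summable (fun k : ℤ => (α k : ℂ)) :=
    Summable.of_norm (by simpa only [Complex.norm_real, Real.norm_eq_abs] using hαabs)
  have hαCsum : (∑' k : ℤ, (α k : ℂ)) = 1 := by
    rw [← Complex.ofReal_tsum, hα1, Complex.ofReal_one]
  have hchar : ∀ θ : ℝ, (∑' k : ℤ, (q k : ℂ) * E θ k)
      = Complex.exp ((c : ℂ) * (∑' k : ℤ, (α k : ℂ) * E θ k) - (c : ℂ)) := by
    intro θ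
    have hqcoe : ∀ k : ℤ, (q k : ℂ) = (Real.exp (-c) : ℂ)
        * ∑' m : ℕ, ((c ^ m / (m.factorial : ℝ) * cpow α m k : ℝ) : ℂ) := by
      intro k
      rw [hqdef]
      rw [Complex.ofReal_mul, Complex.ofReal_tsum]
    set G : ℤ × ℕ → ℂ :=
      fun y => ((c ^ y.2 / (y.2.factorial : ℝ) * cpow α y.2 y.1 : ℝ) : ℂ) * E θ y.1 with hGdef
    have hG : Summable G := by
      apply Summable.of_norm
      have hnorm : (fun y : ℤ × ℕ => ‖G y‖)
          = fun y : ℤ × ℕ => |c ^ y.2 / (y.2.factorial : ℝ) * cpow α y.2 y.1| :=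
        funext fun y => norm_coe_mul_E θ _ _
      rw [hnorm]
      exact Summable.of_nonneg_of_le (fun y => abs_nonneg _) (fun y => hterm y.2 y.1) hFswap
    have hGswap : Summable (fun x : ℕ × ℤ => G (x.2, x.1)) := hG.prod_symm
    have step1 : (∑' k : ℤ, (q k : ℂ) * E θ k)
        = (Real.exp (-c) : ℂ) * ∑' k : ℤ, ∑' m : ℕ, G (k, m) := by
      rw [← tsum_mul_left]
      refine tsum_congr fun k => ?_
      rw [hqcoe k, mul_assoc]
      congr 1
      rw [← tsum_mul_right]
    have step2 : (∑' k : ℤ, ∑' m : ℕ, G (k, m)) = ∑' m : ℕ, ∑' k : ℤ, G (k, m) :=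
      (Summable.tsum_comm' (f := fun (k : ℤ) (m : ℕ) => G (k, m)) (by exact hG)
        (fun k => hG.prod_factor k) (fun m => hGswap.prod_factor m)).symm
    have step3 : ∀ m : ℕ, (∑' k : ℤ, G (k, m))
        = ((c : ℂ) * (∑' k : ℤ, (α k : ℂ) * E θ k)) ^ m / (m.factorial : ℂ) := by
      intro m
      have : (∑' k : ℤ, G (k, m))
          = ((c ^ m / (m.factorial : ℝ) : ℝ) : ℂ) * ∑' k : ℤ, ((cpow α m k : ℝ) : ℂ) * E θ k := by
        rw [← tsum_mul_left]
        refine tsum_congr fun k => ?_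
        rw [hGdef]
        push_cast
        ring
      rw [this, cpow_char hαabs θ m, mul_pow]
      push_cast
      ring
    rw [step1, step2]
    have step4 : (∑' m : ℕ, ∑' k : ℤ, G (k, m))
        = Complex.exp ((c : ℂ) * (∑' k : ℤ, (α k : ℂ) * E θ k)) := by
      rw [tsum_congr step3, IPCP31.cexp_tsum]
    rw [step4, Complex.ofReal_exp, ← Complex.exp_add]
    congr 1
    push_cast
    ring
  -- the sum of q is 1
  have hE0 : ∀ k : ℤ, E (0 : ℝ) k = 1 := fun k => by simp [E]
  have hΦ0 : (∑' k : ℤ, (α k : ℂ) * E (0 : ℝ) k) = 1 := by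
    rw [tsum_congr fun k => by rw [hE0 k, mul_one], hαCsum]
  have hq1 : (∑' k : ℤ, q k) = 1 := by
    have hqsum : Summable q := hq_sum_abs.of_abs
    have hC : ((∑' k : ℤ, q k : ℝ) : ℂ) = 1 := by
      rw [Complex.ofReal_tsum]
      rw [tsum_congr fun k => ((mul_one ((q k : ℂ))).symm.trans (by rw [← hE0 k]))]
      rw [hchar 0, hΦ0, mul_one, sub_self, Complex.exp_zero]
    exact_mod_cast hC
  refine ⟨q, hq1, hq_sum_abs, fun θ => ?_⟩
  show (∑' k : ℤ, (q k : ℂ) * E θ k) ^ n = ∑' k : ℤ, (p k : ℂ) * E θ k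
  have h1 : Summable (fun k : ℤ => (α k : ℂ) * E θ k) := by
    apply Summable.of_norm
    simpa only [norm_coe_mul_E] using hαabs
  have hsplit : (∑' k : ℤ, (α k : ℂ) * (E θ k - 1))
      = (∑' k : ℤ, (α k : ℂ) * E θ k) - 1 := by
    rw [tsum_congr fun k => show (α k : ℂ) * (E θ k - 1) = (α k : ℂ) * E θ k - (α k : ℂ) by ring]
    rw [Summable.tsum_sub h1 hsummableαC, hαCsum]
  have hRHS : (∑' k : ℤ, (p k : ℂ) * E θ k)
      = Complex.exp ((lam : ℂ) * ((∑' k : ℤ, (α k : ℂ) * E θ k) - 1)) := by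
    rw [show (∑' k : ℤ, (p k : ℂ) * E θ k)
      = ∑' k : ℤ, (p k : ℂ) * Complex.exp (Complex.I * (k : ℂ) * (θ : ℂ)) from rfl, hIPCP θ]
    congr 1
    rw [← hsplit]
    rfl
  rw [hchar θ, hRHS, ← Complex.exp_nat_mul]
  congr 1
  have hnc : (n : ℝ) * c = lam := by
    rw [hcdef]
    field_simp
  have hncC : (n : ℂ) * (c : ℂ) = (lam : ℂ) := by exact_mod_cast congrArg Complex.ofReal hnc
  rw [mul_sub, mul_sub, ← mul_assoc, hncC, mul_one]
end

section
/- Corollary 4.1 (Jørgensen set of a Bernoulli distribution with p > 1/2): Let 1/2 < p < 1 and r > 0. There exists a sequence q : ℕ → ℝ with q_i ≥ 0 for all i, Σ_{i=0}^∞ q_i = 1, and Σ_{i=0}^∞ q_i x^i = (p + (1−p)x)^r for all x ∈ [0,1], if and only if r is a positive integer. In other words, the Jørgensen set of the p.g.f. p + (1−p)z is ℕ. -/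
open Finset Set Filter Topology

private noncomputable def binC (r : ℝ) (k : ℕ) : ℝ :=
  (∏ j ∈ Finset.range k, (r - j)) / (Nat.factorial k)

private lemma binC_succ (r : ℝ) (k : ℕ) :
    binC r (k+1) = binC r k * ((r - k) / (k+1)) := by
  unfold binC
  rw [Finset.prod_range_succ, Nat.factorial_succ, div_mul_div_comm]
  congr 1
  push_cast
  ring

private lemma binC_summable {r : ℝ} (hr : 0 < r) {y : ℝ} (hy0 : 0 ≤ y) (hy1 : y < 1) :
    Summable (fun k : ℕ => binC r k * y ^ k) := by
  apply summable_of_ratio_norm_eventually_le hy1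
  filter_upwards [eventually_ge_atTop ⌈r⌉₊] with k hk
  have hrk : r ≤ k := le_trans (Nat.le_ceil r) (by exact_mod_cast hk)
  have hsplit : binC r (k+1) * y ^ (k+1) = (binC r k * y ^ k) * ((r - k) / ((k:ℝ)+1) * y) := by
    rw [binC_succ, pow_succ]; ring
  rw [hsplit, norm_mul]
  have hb : ‖(r - (k:ℝ)) / ((k:ℝ)+1) * y‖ ≤ y := by
    rw [norm_mul, Real.norm_eq_abs, Real.norm_eq_abs, abs_div,
      abs_of_nonneg hy0, abs_of_nonneg (by positivity : (0:ℝ) ≤ (k:ℝ)+1)]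
    have h1 : |r - (k:ℝ)| ≤ (k:ℝ) + 1 := by
      rw [abs_sub_comm, abs_of_nonneg (by linarith)]; linarith
    have : |r - (k:ℝ)| / ((k:ℝ)+1) ≤ 1 := by
      rw [div_le_one (by positivity)]; exact h1
    nlinarith
  calc ‖binC r k * y ^ k‖ * ‖(r - (k:ℝ)) / ((k:ℝ)+1) * y‖
      ≤ ‖binC r k * y ^ k‖ * y := by gcongr
    _ = y * ‖binC r k * y ^ k‖ := mul_comm _ _

private lemma iterderiv_formula (r : ℝ) {y : ℝ} (hy : 0 < y) (n : ℕ) :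
    ∀ t ∈ Set.Icc (0:ℝ) y,
    iteratedDerivWithin n (fun s : ℝ => (1 + s) ^ r) (Set.Icc 0 y) t
      = (∏ j ∈ Finset.range n, (r - j)) * (1 + t) ^ (r - n) := by
  have hUD : UniqueDiffOn ℝ (Set.Icc (0:ℝ) y) := uniqueDiffOn_Icc hy
  induction n with
  | zero => intro t ht; simp
  | succ n ih =>
    intro t ht
    rw [iteratedDerivWithin_succ]
    have h1 : derivWithin (iteratedDerivWithin n (fun s : ℝ => (1 + s) ^ r) (Set.Icc 0 y))
        (Set.Icc 0 y) t
        = derivWithin (fun t : ℝ => (∏ j ∈ Finset.range n, (r - j)) * (1 + t) ^ (r - n))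
          (Set.Icc 0 y) t := derivWithin_congr (fun s hs => ih s hs) (ih t ht)
    have ht0 : (0:ℝ) < 1 + t := by linarith [ht.1]
    have hb : HasDerivAt (fun t : ℝ => 1 + t) 1 t := by
      simpa using (hasDerivAt_id t).const_add (1:ℝ)
    have hD : HasDerivAt (fun t : ℝ => (∏ j ∈ Finset.range n, (r - j)) * (1 + t) ^ (r - n))
        ((∏ j ∈ Finset.range n, (r - j)) * (1 * (r - n) * (1 + t) ^ (r - n - 1))) t :=
      (hb.rpow_const (Or.inl ht0.ne')).const_mul _
    rw [h1, hD.differentiableAt.derivWithin (hUD t ht), hD.deriv, Finset.prod_range_succ]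
    have he : r - (n:ℝ) - 1 = r - ((n+1 : ℕ) : ℝ) := by push_cast; ring
    rw [he]
    ring

private lemma binom_hasSum {r : ℝ} (hr : 0 < r) {y : ℝ} (hy0 : 0 ≤ y) (hy1 : y < 1) :
    HasSum (fun k : ℕ => binC r k * y ^ k) ((1 + y) ^ r) := by
  rcases eq_or_lt_of_le hy0 with h0 | h0
  · have : (fun k : ℕ => binC r k * y ^ k) = fun k => if k = 0 then 1 else 0 := by
      funext k
      cases k with
      | zero => simp [binC]
      | succ k => simp [← h0]
    rw [this, ← h0]
    simpa using hasSum_ite_eq (0 : ℕ) (1 : ℝ)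
  set F : ℝ → ℝ := fun s => (1 + s) ^ r with hF
  have hS := binC_summable hr hy0 hy1
  have key : ∀ m : ℕ, r ≤ m → 1 ≤ m →
      ‖(∑ k ∈ Finset.range m, binC r k * y ^ k) - (1+y) ^ r‖ ≤ ‖binC r m * y ^ m‖ := by
    intro m hrm h1m
    obtain ⟨n, rfl⟩ : ∃ n, m = n + 1 := ⟨m - 1, by omega⟩
    have hUD : UniqueDiffOn ℝ (Set.Icc (0:ℝ) y) := uniqueDiffOn_Icc h0
    have hcd : ContDiffOn ℝ n F (Set.Icc 0 y) := by
      intro t ht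
      have ht0 : (0:ℝ) < 1 + t := by linarith [ht.1]
      exact (((Real.contDiffAt_rpow_const_of_ne (p := r) ht0.ne').comp t
        (((contDiff_const.add contDiff_id).contDiffAt) :
          ContDiffAt ℝ _ (fun s : ℝ => 1 + s) t))).contDiffWithinAt
    have hdiff : DifferentiableOn ℝ (iteratedDerivWithin n F (Set.Icc 0 y)) (Set.Ioo 0 y) := by
      intro t ht
      have ht' : t ∈ Set.Icc (0:ℝ) y := Set.Ioo_subset_Icc_self ht
      have ht0 : (0:ℝ) < 1 + t := by linarith [ht'.1]
      have hb : HasDerivAt (fun t : ℝ => 1 + t) 1 t := by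
        simpa using (hasDerivAt_id t).const_add (1:ℝ)
      have hD : HasDerivAt (fun t : ℝ => (∏ j ∈ Finset.range n, (r - j)) * (1 + t) ^ (r - n))
          ((∏ j ∈ Finset.range n, (r - j)) * (1 * (r - n) * (1 + t) ^ (r - n - 1))) t :=
        (hb.rpow_const (Or.inl ht0.ne')).const_mul _
      exact (hD.differentiableAt.differentiableWithinAt).congr
        (fun s hs => iterderiv_formula r h0 n s (Set.Ioo_subset_Icc_self hs))
        (iterderiv_formula r h0 n t ht')
    obtain ⟨x', hx', htay⟩ := taylor_mean_remainder_lagrange (f := F) (x₀ := 0) (x := y)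
      h0.ne (by rwa [Set.uIcc_of_le h0.le]) (by rwa [Set.uIcc_of_le h0.le, Set.uIoo_of_le h0.le])
    rw [Set.uIoo_of_le h0.le] at hx'; rw [Set.uIcc_of_le h0.le] at htay
    have htp : taylorWithinEval F n (Set.Icc 0 y) 0 y
        = ∑ k ∈ Finset.range (n+1), binC r k * y ^ k := by
      rw [taylor_within_apply]
      apply Finset.sum_congr rfl
      intro k hk
      rw [iterderiv_formula r h0 k 0 (Set.left_mem_Icc.mpr h0.le)]
      rw [smul_eq_mul]
      have : ((1:ℝ) + 0) ^ (r - k) = 1 := by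
        rw [add_zero, Real.one_rpow]
      rw [this, binC]
      field_simp
      ring
    have hx'0 : (0:ℝ) < 1 + x' := by have := hx'.1; linarith
    have hrem : iteratedDerivWithin (n+1) F (Set.Icc 0 y) x'
        = (∏ j ∈ Finset.range (n+1), (r - j)) * (1 + x') ^ (r - (n+1 : ℕ)) :=
      iterderiv_formula r h0 (n+1) x' (Set.Ioo_subset_Icc_self hx')
    rw [htp] at htay
    rw [norm_sub_rev]
    have hFy : F y = (1+y) ^ r := rfl
    rw [← hFy, htay, hrem, sub_zero]
    have hple : (1 + x') ^ (r - ((n+1:ℕ):ℝ)) ≤ 1 := by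
      apply Real.rpow_le_one_of_one_le_of_nonpos (by linarith [hx'.1])
      push_cast
      push_cast at hrm
      linarith
    have hppos : (0:ℝ) < (1 + x') ^ (r - ((n+1:ℕ):ℝ)) := Real.rpow_pos_of_pos hx'0 _
    have hRHS : ‖binC r (n+1) * y ^ (n+1)‖
        = |∏ j ∈ Finset.range (n+1), (r - (j:ℝ))| / (((n+1).factorial : ℝ)) * y ^ (n+1) := by
      rw [Real.norm_eq_abs, binC, abs_mul, abs_div,
        abs_of_pos (show (0:ℝ) < (((n+1).factorial : ℝ)) by positivity),
        abs_of_pos (show (0:ℝ) < y ^ (n+1) by positivity)]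
    rw [hRHS, Real.norm_eq_abs, abs_div, abs_mul, abs_mul,
      abs_of_pos (show (0:ℝ) < y ^ (n+1) by positivity),
      abs_of_pos (show (0:ℝ) < (((n+1).factorial : ℝ)) by positivity),
      abs_of_pos hppos, div_le_iff₀ (by positivity)]
    calc |∏ j ∈ Finset.range (n+1), (r - (j:ℝ))| * (1 + x') ^ (r - ((n+1:ℕ):ℝ)) * y ^ (n+1)
        ≤ |∏ j ∈ Finset.range (n+1), (r - (j:ℝ))| * 1 * y ^ (n+1) := by gcongr
      _ = |∏ j ∈ Finset.range (n+1), (r - (j:ℝ))| / (((n+1).factorial : ℝ)) * y ^ (n+1)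
          * (((n+1).factorial : ℝ)) := by field_simp
  have h1 : Tendsto (fun m => ∑ k ∈ Finset.range m, binC r k * y ^ k) atTop
      (𝓝 (∑' k, binC r k * y ^ k)) := hS.hasSum.tendsto_sum_nat
  have hz : Tendsto (fun m : ℕ => ‖binC r m * y ^ m‖) atTop (𝓝 0) :=
    tendsto_zero_iff_norm_tendsto_zero.mp hS.tendsto_atTop_zero
  have h2 : Tendsto (fun m => ∑ k ∈ Finset.range m, binC r k * y ^ k) atTop
      (𝓝 ((1+y) ^ r)) := by
    rw [tendsto_iff_norm_sub_tendsto_zero]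
    apply squeeze_zero_norm' _ hz
    filter_upwards [eventually_ge_atTop (max 1 ⌈r⌉₊)] with m hm
    have h1m : 1 ≤ m := le_trans (le_max_left _ _) hm
    have hrm : r ≤ m := le_trans (Nat.le_ceil r)
      (by exact_mod_cast le_trans (le_max_right _ _) hm)
    simpa using key m hrm h1m
  have := tendsto_nhds_unique h1 h2
  rw [← this]
  exact hS.hasSum

set_option maxHeartbeats 1000000 in
private lemma coeff_zero {d : ℕ → ℝ} (hd : Summable fun k => |d k|)
    (h : ∀ x : ℝ, 0 < x → x ≤ 1 → (∑' k, d k * x ^ k) = 0) : ∀ k, d k = 0 := by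
  intro k
  induction k using Nat.strong_induction_on with
  | _ k ih =>
  set Cd : ℝ := ∑' i, |d i| with hCd
  have hCd0 : 0 ≤ Cd := tsum_nonneg (fun i => abs_nonneg _)
  have hd' : Summable d := hd.of_abs
  have key : ∀ x : ℝ, 0 < x → x ≤ 1 → |d k| ≤ x * Cd := by
    intro x hx0 hx1
    have hsx : Summable fun i => d i * x ^ i := by
      apply Summable.of_abs
      apply hd.of_nonneg_of_le (fun i => abs_nonneg _)
      intro i
      rw [abs_mul, abs_pow, abs_of_pos hx0]
      calc |d i| * x ^ i ≤ |d i| * 1 := by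
            gcongr
            exact pow_le_one₀ hx0.le hx1
        _ = |d i| := mul_one _
    have hsplit := (Summable.sum_add_tsum_nat_add (f := fun i => d i * x ^ i) (k+1) hsx).symm
    rw [h x hx0 hx1] at hsplit
    have hsum0 : (∑ i ∈ Finset.range (k+1), d i * x ^ i) = d k * x ^ k := by
      rw [Finset.sum_range_succ]
      have : ∀ i ∈ Finset.range k, d i * x ^ i = 0 := by
        intro i hi
        rw [ih i (Finset.mem_range.mp hi), zero_mul]
      rw [Finset.sum_eq_zero this, zero_add]
    rw [hsum0] at hsplit
    have heq : d k * x ^ k = - ∑' i, d (i + (k+1)) * x ^ (i + (k+1)) := by linarith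
    have hshift : Summable fun i => |d (i + (k+1))| := (summable_nat_add_iff (k+1)).mpr hd
    have hle : ∀ i, |d (i + (k+1)) * x ^ (i + (k+1))| ≤ x ^ (k+1) * |d (i + (k+1))| := by
      intro i
      rw [abs_mul, abs_pow, abs_of_pos hx0, mul_comm (x ^ (k+1))]
      exact mul_le_mul_of_nonneg_left
        (pow_le_pow_of_le_one hx0.le hx1 (Nat.le_add_left (k+1) i)) (abs_nonneg _)
    have hsum2 : Summable fun i => |d (i + (k+1)) * x ^ (i + (k+1))| :=
      (hshift.mul_left (x^(k+1))).of_nonneg_of_le (fun i => abs_nonneg _) hle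
    have hbound : |∑' i, d (i + (k+1)) * x ^ (i + (k+1))| ≤ x ^ (k+1) * Cd := by
      calc |∑' i, d (i + (k+1)) * x ^ (i + (k+1))|
          ≤ ∑' i, |d (i + (k+1)) * x ^ (i + (k+1))| := by
            simpa only [Real.norm_eq_abs] using
              norm_tsum_le_tsum_norm (f := fun i => d (i + (k+1)) * x ^ (i + (k+1)))
                (by simpa only [Real.norm_eq_abs] using hsum2)
        _ ≤ ∑' i, x ^ (k+1) * |d (i + (k+1))| :=
            Summable.tsum_le_tsum hle hsum2 (hshift.mul_left _)
        _ = x ^ (k+1) * ∑' i, |d (i + (k+1))| := tsum_mul_left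
        _ ≤ x ^ (k+1) * Cd := by
            gcongr
            exact Summable.tsum_le_tsum_of_inj (fun i => i + (k+1))
              (add_left_injective _) (fun c _ => abs_nonneg _)
              (fun i => le_refl _) hshift hd
    have hxk : (0:ℝ) < x ^ k := by positivity
    have hkey : |d k| * x ^ k ≤ x ^ (k+1) * Cd := by
      rw [← abs_of_pos hxk, ← abs_mul, heq, abs_neg]
      exact hbound
    have hpow : x ^ (k+1) = x ^ k * x := pow_succ x k
    rw [hpow] at hkey
    calc |d k| = |d k| * x ^ k / x ^ k := by field_simp
      _ ≤ x ^ k * x * Cd / x ^ k := by gcongr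
      _ = x * Cd := by field_simp
  by_contra hne
  have habs : 0 < |d k| := abs_pos.mpr hne
  set x : ℝ := min 1 (|d k| / (2 * (Cd + 1))) with hx
  have hx0 : 0 < x := lt_min one_pos (by positivity)
  have hx1 : x ≤ 1 := min_le_left _ _
  have h2 : |d k| ≤ x * Cd := key x hx0 hx1
  have h3 : x ≤ |d k| / (2 * (Cd + 1)) := min_le_right _ _
  have h4 : x * Cd ≤ |d k| / (2 * (Cd + 1)) * Cd := by gcongr
  have h5 : |d k| / (2 * (Cd + 1)) * Cd < |d k| := by
    rw [div_mul_eq_mul_div, div_lt_iff₀ (by positivity)]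
    nlinarith
  linarith

/-- Corollary 4.1: for a Bernoulli p.g.f. `p + (1-p) z` with `1/2 < p < 1`,
the real power `(p + (1-p) x) ^ r` (with `r > 0`) is the p.g.f. of a discrete
probability distribution on ℕ if and only if `r` is a positive integer;
i.e. the Jørgensen set of this p.g.f. is ℕ. -/
theorem jorgensen_set_bernoulli
    (p : ℝ) (hp : 1 / 2 < p) (hp1 : p < 1) (r : ℝ) (hr : 0 < r) :
    (∃ q : ℕ → ℝ, (∀ i, 0 ≤ q i) ∧ (∑' i, q i) = 1 ∧
      ∀ x : ℝ, x ∈ Set.Icc (0 : ℝ) 1 →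
        (∑' i, q i * x ^ i) = (p + (1 - p) * x) ^ r) ↔
    (∃ n : ℕ, 0 < n ∧ r = n) := by
  have hp0 : (0:ℝ) < p := by linarith
  have h1p : (0:ℝ) < 1 - p := by linarith
  constructor
  · rintro ⟨q, hq0, hq1, hqx⟩
    by_contra hcon
    push_neg at hcon
    have hnotnat : ∀ n : ℕ, r ≠ (n : ℝ) := by
      intro n hn
      rcases Nat.eq_zero_or_pos n with h | h
      · rw [h] at hn; simp at hn; linarith
      · exact hcon n h hn
    set u : ℝ := (1 - p) / p with hu
    have hu0 : 0 < u := div_pos h1p hp0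
    have hu1 : u < 1 := by
      rw [hu, div_lt_one hp0]; linarith
    set a : ℕ → ℝ := fun k => p ^ r * (binC r k * u ^ k) with ha
    have hA : ∀ x ∈ Set.Icc (0:ℝ) 1, HasSum (fun k => a k * x ^ k) ((p + (1-p)*x) ^ r) := by
      intro x hx
      have hy0 : 0 ≤ u * x := mul_nonneg hu0.le hx.1
      have hy1 : u * x < 1 :=
        lt_of_le_of_lt (by nlinarith [hx.2] : u * x ≤ u) hu1
      have hb := (binom_hasSum hr hy0 hy1).mul_left (p ^ r)
      have hfun : (fun k => a k * x ^ k) = fun k => p ^ r * (binC r k * (u*x) ^ k) := by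
        funext k
        rw [ha, mul_pow]
        ring
      have hval : (p + (1-p)*x) ^ r = p ^ r * (1 + u*x) ^ r := by
        have hb0 : p + (1-p)*x = p * (1 + u*x) := by
          rw [hu]; field_simp
        rw [hb0, Real.mul_rpow hp0.le (by nlinarith : (0:ℝ) ≤ 1 + u*x)]
      rw [hfun, hval]
      exact hb
    have hqsum : Summable q := by
      by_contra hs
      rw [tsum_eq_zero_of_not_summable hs] at hq1
      exact zero_ne_one hq1
    have hasum : Summable a := by
      have := (hA 1 (by constructor <;> norm_num)).summable
      simpa using this
    have hd0 : ∀ x : ℝ, 0 < x → x ≤ 1 → (∑' k, (q k - a k) * x ^ k) = 0 := by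
      intro x hx0 hx1
      have hx : x ∈ Set.Icc (0:ℝ) 1 := ⟨hx0.le, hx1⟩
      have hqs : Summable fun k => q k * x ^ k := by
        apply hqsum.of_nonneg_of_le
          (fun k => mul_nonneg (hq0 k) (pow_nonneg hx0.le k))
        intro k
        calc q k * x ^ k ≤ q k * 1 :=
              mul_le_mul_of_nonneg_left (pow_le_one₀ hx0.le hx1) (hq0 k)
          _ = q k := mul_one _
      have has : Summable fun k => a k * x ^ k := (hA x hx).summable
      have : (∑' k, (q k - a k) * x ^ k)
          = (∑' k, q k * x ^ k) - (∑' k, a k * x ^ k) := by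
        rw [← Summable.tsum_sub hqs has]
        apply tsum_congr
        intro k
        ring
      rw [this, hqx x hx, (hA x hx).tsum_eq, sub_self]
    have habs : Summable fun k => |q k - a k| := (hqsum.sub hasum).abs
    have hqa : ∀ k, q k = a k := by
      intro k
      have := coeff_zero habs hd0 k
      linarith
    set m : ℕ := ⌈r⌉₊ with hm
    have hm0 : 0 < m := Nat.ceil_pos.mpr hr
    have hrm : r < m := lt_of_le_of_ne (Nat.le_ceil r) (hnotnat m)
    have hprodpos : 0 < ∏ j ∈ Finset.range m, (r - (j:ℝ)) := by
      apply Finset.prod_pos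
      intro j hj
      have hjm : j < m := Finset.mem_range.mp hj
      have : ¬ r ≤ (j:ℝ) := by
        intro hle
        have := Nat.ceil_le.mpr hle
        omega
      push_neg at this
      linarith
    have hprodneg : ∏ j ∈ Finset.range (m+1), (r - (j:ℝ)) < 0 := by
      rw [Finset.prod_range_succ]
      exact mul_neg_of_pos_of_neg hprodpos (by linarith)
    have haneg : a (m+1) < 0 := by
      have h1 : binC r (m+1) < 0 :=
        div_neg_of_neg_of_pos hprodneg (by positivity)
      have h2 : binC r (m+1) * u ^ (m+1) < 0 :=
        mul_neg_of_neg_of_pos h1 (by positivity)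
      exact mul_neg_of_pos_of_neg (Real.rpow_pos_of_pos hp0 r) h2
    have := hq0 (m+1)
    rw [hqa (m+1)] at this
    linarith
  · rintro ⟨n, hn, rfl⟩
    set Q : ℕ → ℝ := fun i => if i ≤ n then (n.choose i : ℝ) * p ^ (n - i) * (1 - p) ^ i else 0
      with hQ
    have hQ0 : ∀ i, 0 ≤ Q i := by
      intro i
      rw [hQ]
      dsimp only
      split
      · exact mul_nonneg (mul_nonneg (by positivity) (pow_nonneg hp0.le _))
          (pow_nonneg h1p.le _)
      · exact le_refl 0
    have hQsupp : ∀ i ∉ Finset.range (n+1), Q i = 0 := by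
      intro i hi
      rw [hQ]
      dsimp only
      rw [if_neg]
      intro hle
      exact hi (Finset.mem_range.mpr (by omega))
    have hQx : ∀ x : ℝ, (∑' i, Q i * x ^ i) = (p + (1-p)*x) ^ (n:ℕ) := by
      intro x
      rw [tsum_eq_sum (s := Finset.range (n+1)) (fun i hi => by rw [hQsupp i hi, zero_mul])]
      have hap := add_pow ((1 - p) * x) p n
      have hsum : (∑ i ∈ Finset.range (n+1), Q i * x ^ i)
          = ∑ i ∈ Finset.range (n+1), ((1-p)*x) ^ i * p ^ (n - i) * (n.choose i : ℝ) := by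
        apply Finset.sum_congr rfl
        intro i hi
        have hin : i ≤ n := by have := Finset.mem_range.mp hi; omega
        rw [hQ]
        dsimp only
        rw [if_pos hin, mul_pow]
        ring
      rw [hsum, ← hap]
      ring
    refine ⟨Q, hQ0, ?_, ?_⟩
    · have h1 := hQx 1
      have hl : (∑' i, Q i * (1:ℝ) ^ i) = ∑' i, Q i := by
        apply tsum_congr
        intro i
        rw [one_pow, mul_one]
      have hrr : (p + (1-p)*(1:ℝ)) ^ (n:ℕ) = 1 := by
        have : p + (1-p)*(1:ℝ) = 1 := by ring
        rw [this, one_pow]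
      rw [hl, hrr] at h1
      exact h1
    · intro x hx
      rw [Real.rpow_natCast]
      exact hQx x
end

section
/- Corollary 4.2: Let (α_k)_{k≥1} be a real sequence with Σ_{k≥1} α_k = 1 and Σ_{k≥1} |α_k| < ∞, and suppose α_m < 0 for some m ≥ 1. Then there exists λ₀ > 0 such that for every λ with 0 < λ < λ₀ there is NO sequence P : ℕ → ℝ with P_i ≥ 0 for all i and Σ_{i=0}^∞ P_i x^i = exp(λ Σ_{k≥1} α_k (x^k − 1)) for all x ∈ [0,1]; that is, exp(λ Σ_{k≥1} α_k (z^k − 1)) is not a probability generating function for λ sufficiently small. -/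
open Finset

noncomputable def D (t : ℝ) (u : ℝ → ℝ) : ℝ → ℝ := fun x => u (x + t) - u x

lemma D_iter_succ' (t : ℝ) (n : ℕ) (u : ℝ → ℝ) (x : ℝ) :
    (D t)^[n + 1] u x = (D t)^[n] u (x + t) - (D t)^[n] u x := by
  rw [Function.iterate_succ_apply']; rfl

lemma D_iter_zero_fun (t : ℝ) (n : ℕ) (x : ℝ) : (D t)^[n] (fun _ => (0:ℝ)) x = 0 := by
  induction n generalizing x with
  | zero => rfl
  | succ n IH =>
    rw [Function.iterate_succ_apply]
    have h : D t (fun _ => (0:ℝ)) = fun _ => (0:ℝ) := by funext y; simp [D]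
    rw [h]; exact IH x

lemma D_iter_const (t : ℝ) (n : ℕ) (c x : ℝ) (hn : n ≠ 0) : (D t)^[n] (fun _ => c) x = 0 := by
  obtain ⟨n', rfl⟩ : ∃ n', n = n' + 1 := ⟨n - 1, by omega⟩
  rw [Function.iterate_succ_apply]
  have h : D t (fun _ => c) = fun _ => (0:ℝ) := by funext y; simp [D]
  rw [h, D_iter_zero_fun]

lemma D_iter_add (t : ℝ) (n : ℕ) (u v : ℝ → ℝ) (x : ℝ) :
    (D t)^[n] (fun y => u y + v y) x = (D t)^[n] u x + (D t)^[n] v x := by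
  induction n generalizing u v x with
  | zero => rfl
  | succ n IH =>
    rw [Function.iterate_succ_apply, Function.iterate_succ_apply (D t) n u,
      Function.iterate_succ_apply (D t) n v]
    have h : D t (fun y => u y + v y) = fun y => D t u y + D t v y := by
      funext y; simp only [D]; ring
    rw [h]; exact IH _ _ x

lemma D_iter_const_mul (t : ℝ) (n : ℕ) (c : ℝ) (u : ℝ → ℝ) (x : ℝ) :
    (D t)^[n] (fun y => c * u y) x = c * (D t)^[n] u x := by
  induction n generalizing u x with
  | zero => rfl
  | succ n IH =>
    rw [Function.iterate_succ_apply, Function.iterate_succ_apply (D t) n u]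
    have h : D t (fun y => c * u y) = fun y => c * D t u y := by
      funext y; simp only [D]; ring
    rw [h]; exact IH _ x

lemma D_iter_sum {ι : Type*} (t : ℝ) (n : ℕ) (s : Finset ι) (f : ι → ℝ → ℝ) (x : ℝ) :
    (D t)^[n] (fun y => ∑ j ∈ s, f j y) x = ∑ j ∈ s, (D t)^[n] (f j) x := by
  induction n generalizing f x with
  | zero => rfl
  | succ n IH =>
    rw [Function.iterate_succ_apply]
    have h : D t (fun y => ∑ j ∈ s, f j y) = fun y => ∑ j ∈ s, D t (f j) y := by
      funext y; simp only [D]; rw [← Finset.sum_sub_distrib]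
    rw [h, IH]
    exact Finset.sum_congr rfl fun j _ => by rw [Function.iterate_succ_apply]

lemma D_pow (t x : ℝ) (i : ℕ) :
    D t (fun y => y ^ i) x = ∑ j ∈ range i, ((i.choose j : ℝ) * t ^ (i - j)) * x ^ j := by
  show (x + t) ^ i - x ^ i = _
  rw [add_pow, Finset.sum_range_succ]
  simp only [Nat.sub_self, pow_zero, Nat.choose_self, Nat.cast_one, mul_one, one_mul]
  rw [add_sub_cancel_right]
  exact Finset.sum_congr rfl fun j _ => by ring

lemma D_iter_pow_eq_zero (t : ℝ) (i : ℕ) :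
    ∀ (n : ℕ) (x : ℝ), i < n → (D t)^[n] (fun y => y ^ i) x = 0 := by
  induction i using Nat.strong_induction_on with
  | _ i IH =>
    intro n x hin
    obtain ⟨n', rfl⟩ : ∃ n', n = n' + 1 := ⟨n - 1, by omega⟩
    rw [Function.iterate_succ_apply]
    have hD : D t (fun y => y ^ i) =
        fun y => ∑ j ∈ range i, ((i.choose j : ℝ) * t ^ (i - j)) * y ^ j :=
      funext fun y => D_pow t y i
    rw [hD, D_iter_sum]
    refine Finset.sum_eq_zero fun j hj => ?_
    have hji : j < i := Finset.mem_range.mp hj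
    rw [D_iter_const_mul, IH j hji n' x (by omega), mul_zero]

lemma D_iter_pow_self (t : ℝ) : ∀ (n : ℕ) (x : ℝ),
    (D t)^[n] (fun y => y ^ n) x = (n.factorial : ℝ) * t ^ n := by
  intro n
  induction n with
  | zero => intro x; simp
  | succ n IH =>
    intro x
    rw [Function.iterate_succ_apply]
    have hD : D t (fun y => y ^ (n + 1)) =
        fun y => ∑ j ∈ range (n + 1), (((n + 1).choose j : ℝ) * t ^ (n + 1 - j)) * y ^ j :=
      funext fun y => D_pow t y (n + 1)
    rw [hD, D_iter_sum, Finset.sum_range_succ]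
    have h0 : ∀ j ∈ range n,
        (D t)^[n] (fun y => (((n + 1).choose j : ℝ) * t ^ (n + 1 - j)) * y ^ j) x = 0 := by
      intro j hj
      rw [D_iter_const_mul, D_iter_pow_eq_zero t j n x (Finset.mem_range.mp hj), mul_zero]
    rw [Finset.sum_eq_zero h0, zero_add, D_iter_const_mul, IH x, Nat.choose_succ_self_right]
    have h1 : n + 1 - n = 1 := by omega
    rw [h1]
    push_cast [Nat.factorial_succ]
    ring

lemma D_iter_pow_nonneg (t : ℝ) (ht : 0 ≤ t) (i : ℕ) :
    ∀ (n : ℕ) (x : ℝ), 0 ≤ x → 0 ≤ (D t)^[n] (fun y => y ^ i) x := by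
  induction i using Nat.strong_induction_on with
  | _ i IH =>
    intro n x hx
    cases n with
    | zero => simpa using pow_nonneg hx i
    | succ n =>
      rw [Function.iterate_succ_apply]
      have hD : D t (fun y => y ^ i) =
          fun y => ∑ j ∈ range i, ((i.choose j : ℝ) * t ^ (i - j)) * y ^ j :=
        funext fun y => D_pow t y i
      rw [hD, D_iter_sum]
      refine Finset.sum_nonneg fun j hj => ?_
      rw [D_iter_const_mul]
      exact mul_nonneg (mul_nonneg (Nat.cast_nonneg _) (pow_nonneg ht _))
        (IH j (Finset.mem_range.mp hj) n x hx)

lemma D_iter_abs_le (t : ℝ) (ht : 0 ≤ t) (B : ℝ) :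
    ∀ (n : ℕ) (u : ℝ → ℝ) (x : ℝ),
      (∀ y, x ≤ y → y ≤ x + n * t → |u y| ≤ B) → |(D t)^[n] u x| ≤ 2 ^ n * B := by
  intro n
  induction n with
  | zero =>
    intro u x hu
    simpa using hu x le_rfl (by simp)
  | succ n IH =>
    intro u x hu
    rw [D_iter_succ']
    have h1 : |(D t)^[n] u x| ≤ 2 ^ n * B := by
      refine IH u x fun y hy1 hy2 => hu y hy1 ?_
      push_cast
      push_cast at hy2
      nlinarith
    have h2 : |(D t)^[n] u (x + t)| ≤ 2 ^ n * B := by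
      refine IH u (x + t) fun y hy1 hy2 => hu y (by linarith) ?_
      push_cast
      push_cast at hy2
      linarith
    have h3 : |(D t)^[n] u (x + t) - (D t)^[n] u x|
        ≤ |(D t)^[n] u (x + t)| + |(D t)^[n] u x| := by
      rw [sub_eq_add_neg]
      exact (abs_add_le _ _).trans (le_of_eq (by rw [abs_neg]))
    have h4 : (2:ℝ) ^ (n + 1) * B = 2 ^ n * B + 2 ^ n * B := by ring
    rw [h4]
    linarith

lemma D_iter_congr (t : ℝ) (ht : 0 ≤ t) :
    ∀ (n : ℕ) (u v : ℝ → ℝ) (x : ℝ),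
      (∀ y, x ≤ y → y ≤ x + n * t → u y = v y) → (D t)^[n] u x = (D t)^[n] v x := by
  intro n
  induction n with
  | zero =>
    intro u v x huv
    exact huv x le_rfl (by simp)
  | succ n IH =>
    intro u v x huv
    rw [D_iter_succ', D_iter_succ']
    have h1 : (D t)^[n] u x = (D t)^[n] v x := by
      refine IH u v x fun y hy1 hy2 => huv y hy1 ?_
      push_cast; push_cast at hy2; nlinarith
    have h2 : (D t)^[n] u (x + t) = (D t)^[n] v (x + t) := by
      refine IH u v (x + t) fun y hy1 hy2 => huv y (by linarith) ?_
      push_cast; push_cast at hy2; linarith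
    rw [h1, h2]

lemma D_iter_tsum (t : ℝ) (ht : 0 ≤ t) (w : ℕ → ℝ → ℝ)
    (hw : ∀ x : ℝ, 0 ≤ x → x ≤ 1 → Summable fun k => w k x) :
    ∀ (n : ℕ) (x : ℝ), 0 ≤ x → x + n * t ≤ 1 →
      Summable (fun k => (D t)^[n] (w k) x) ∧
        (D t)^[n] (fun y => ∑' k, w k y) x = ∑' k, (D t)^[n] (w k) x := by
  intro n
  induction n with
  | zero =>
    intro x hx hx1
    exact ⟨hw x hx (by simpa using hx1), rfl⟩
  | succ n IH =>
    intro x hx hx1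
    have hx1' : x + n * t ≤ 1 := by push_cast at hx1 ⊢; nlinarith
    have hxh : (x + t) + n * t ≤ 1 := by push_cast at hx1 ⊢; linarith
    obtain ⟨s1, e1⟩ := IH (x + t) (by linarith) hxh
    obtain ⟨s2, e2⟩ := IH x hx hx1'
    constructor
    · have h : (fun k => (D t)^[n + 1] (w k) x)
          = fun k => (D t)^[n] (w k) (x + t) - (D t)^[n] (w k) x := by
        funext k; rw [D_iter_succ']
      rw [h]; exact s1.sub s2
    · rw [D_iter_succ', e1, e2, ← Summable.tsum_sub s1 s2]
      exact tsum_congr fun k => (D_iter_succ' t n (w k) x).symm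
set_option maxHeartbeats 1000000 in
/-- Corollary 4.2: if some `α_k` (here `α k = α_{k+1}`, some entry negative)
is negative, then `exp (λ ∑ α_k (x^k - 1))` is not a probability generating
function for all sufficiently small `λ > 0`. -/
theorem not_pgf_for_small_lambda
    (α : ℕ → ℝ) (hα1 : (∑' k, α k) = 1) (hαabs : Summable (fun k => |α k|))
    (hneg : ∃ m : ℕ, α m < 0) :
    ∃ lam₀ : ℝ, 0 < lam₀ ∧ ∀ lam : ℝ, 0 < lam → lam < lam₀ →
      ¬ ∃ P : ℕ → ℝ, (∀ i, 0 ≤ P i) ∧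
        ∀ x : ℝ, x ∈ Set.Icc (0 : ℝ) 1 →
          (∑' i, P i * x ^ i) =
            Real.exp (lam * ∑' k, α k * (x ^ (k + 1) - 1)) := by
  obtain ⟨m, hm⟩ := hneg
  have hαs : Summable α := summable_abs_iff.mp hαabs
  obtain ⟨A, hA⟩ : ∃ A : ℝ, A = ∑' k, |α k| := ⟨_, rfl⟩
  have hAm : |α m| ≤ A := by rw [hA]; exact Summable.le_tsum hαabs m fun j _ => abs_nonneg _
  have hA0 : 0 < A := lt_of_lt_of_le (abs_pos.mpr hm.ne) hAm
  obtain ⟨a, hadef⟩ : ∃ a : ℝ, a = -α m := ⟨_, rfl⟩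
  have ha : 0 < a := by rw [hadef]; exact neg_pos.mpr hm
  obtain ⟨n, hn⟩ : ∃ n : ℕ, n = m + 1 := ⟨_, rfl⟩
  have hnpos : (0:ℝ) < (n:ℝ) := by rw [hn]; exact_mod_cast Nat.succ_pos m
  obtain ⟨C2, hC2⟩ : ∃ C2 : ℝ, C2 = 2 ^ (n + 1) * (n : ℝ) ^ (n + 1) * A := ⟨_, rfl⟩
  have hC2pos : 0 < C2 := by
    rw [hC2]; exact mul_pos (mul_pos (by positivity) (pow_pos hnpos _)) hA0
  have hfacpos : (0:ℝ) < (n.factorial : ℝ) := by exact_mod_cast n.factorial_pos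
  obtain ⟨t, htdef⟩ : ∃ t : ℝ,
      t = min (1 / (2 * (n:ℝ))) (a * (n.factorial : ℝ) / (C2 + 1)) := ⟨_, rfl⟩
  have htpos : 0 < t := by
    rw [htdef]
    exact lt_min (one_div_pos.mpr (by linarith)) (div_pos (mul_pos ha hfacpos) (by linarith))
  have hnt1 : (n:ℝ) * t ≤ 1 := by
    have h1 : t ≤ 1 / (2 * (n:ℝ)) := by rw [htdef]; exact min_le_left _ _
    have h2 : (n:ℝ) * t ≤ (n:ℝ) * (1 / (2 * (n:ℝ))) :=
      mul_le_mul_of_nonneg_left h1 (le_of_lt hnpos)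
    have h3 : (n:ℝ) * (1 / (2 * (n:ℝ))) = 1/2 := by field_simp
    nlinarith
  have hnt0 : (0:ℝ) ≤ (n:ℝ) * t := mul_nonneg hnpos.le htpos.le
  obtain ⟨δ, hδ⟩ : ∃ d : ℝ, d = a * (n.factorial : ℝ) * t ^ n / 2 := ⟨_, rfl⟩
  have hδpos : 0 < δ := by
    have h := mul_pos (mul_pos ha hfacpos) (pow_pos htpos n)
    rw [hδ]; exact div_pos h two_pos
  refine ⟨min (1 / (A + 1)) (δ / (2 ^ n * A ^ 2 + 1)),
    lt_min (one_div_pos.mpr (by linarith)) (div_pos hδpos (by positivity)), ?_⟩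
  intro lam hl0 hl1
  rintro ⟨P, hP, hPsum⟩
  -- summability facts
  have hws : ∀ x : ℝ, 0 ≤ x → x ≤ 1 → Summable fun k => α k * x ^ (k + 1) := by
    intro x hx0 hx1
    refine Summable.of_norm_bounded hαabs fun k => ?_
    rw [Real.norm_eq_abs, abs_mul]
    have h1 : |x ^ (k+1)| ≤ 1 := by
      rw [abs_of_nonneg (pow_nonneg hx0 _)]; exact pow_le_one₀ hx0 hx1
    nlinarith [abs_nonneg (α k), abs_nonneg (x ^ (k+1))]
  have htermb : ∀ x : ℝ, 0 ≤ x → x ≤ 1 → ∀ k : ℕ, |α k * (x ^ (k + 1) - 1)| ≤ |α k| := by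
    intro x hx0 hx1 k
    rw [abs_mul]
    have h1 : 0 ≤ x ^ (k+1) := pow_nonneg hx0 _
    have h2 : x ^ (k+1) ≤ 1 := pow_le_one₀ hx0 hx1
    have h3 : |x ^ (k+1) - 1| ≤ 1 := by rw [abs_le]; constructor <;> linarith
    nlinarith [abs_nonneg (α k)]
  have hwg : ∀ x : ℝ, 0 ≤ x → x ≤ 1 → Summable fun k => α k * (x ^ (k + 1) - 1) := by
    intro x hx0 hx1
    refine Summable.of_norm_bounded hαabs fun k => ?_
    rw [Real.norm_eq_abs]; exact htermb x hx0 hx1 k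
  have hgA : ∀ x : ℝ, 0 ≤ x → x ≤ 1 → |∑' k, α k * (x ^ (k + 1) - 1)| ≤ A := by
    intro x hx0 hx1
    have hs := hwg x hx0 hx1
    calc |∑' k, α k * (x ^ (k+1) - 1)| ≤ ∑' k, |α k * (x ^ (k+1) - 1)| := by
          simpa only [Real.norm_eq_abs] using
            norm_tsum_le_tsum_norm (f := fun k => α k * (x ^ (k+1) - 1))
              (by simpa only [Real.norm_eq_abs] using hs.abs)
      _ ≤ ∑' k, |α k| := Summable.tsum_le_tsum (htermb x hx0 hx1) hs.abs hαabs
      _ = A := hA.symm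
  -- summability of the P-series
  have hFs : ∀ x : ℝ, 0 ≤ x → x ≤ 1 → Summable fun i => P i * x ^ i := by
    intro x hx0 hx1
    by_contra hns
    have h0 : (∑' i, P i * x ^ i) = 0 := tsum_eq_zero_of_not_summable hns
    have h1 := hPsum x (Set.mem_Icc.mpr ⟨hx0, hx1⟩)
    rw [h0] at h1
    exact (Real.exp_pos _).ne' h1.symm
  -- nonnegativity side
  have hDF : Summable (fun i => (D t)^[n] (fun y => P i * y ^ i) 0)
      ∧ (D t)^[n] (fun y => ∑' i, P i * y ^ i) 0
        = ∑' i, (D t)^[n] (fun y => P i * y ^ i) 0 :=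
    D_iter_tsum t htpos.le (fun i y => P i * y ^ i) hFs n 0 le_rfl (by simpa using hnt1)
  have hDFnn : 0 ≤ (D t)^[n] (fun y => ∑' i, P i * y ^ i) 0 := by
    rw [hDF.2]
    refine tsum_nonneg fun i => ?_
    have h1 : (D t)^[n] (fun y => P i * y ^ i) 0 = P i * (D t)^[n] (fun y => y ^ i) 0 :=
      D_iter_const_mul t n (P i) _ 0
    rw [h1]
    exact mul_nonneg (hP i) (D_iter_pow_nonneg t htpos.le i n 0 le_rfl)
  have hcong : (D t)^[n] (fun y => ∑' i, P i * y ^ i) 0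
      = (D t)^[n] (fun y => Real.exp (lam * ∑' k, α k * (y ^ (k + 1) - 1))) 0 := by
    refine D_iter_congr t htpos.le n _ _ 0 fun y hy1 hy2 => ?_
    have hy2' : y ≤ 1 := le_trans hy2 (by simpa using hnt1)
    exact hPsum y (Set.mem_Icc.mpr ⟨hy1, hy2'⟩)
  -- decomposition of the exponential
  have hsplit : (fun y : ℝ => Real.exp (lam * ∑' k, α k * (y ^ (k + 1) - 1)))
      = fun y => (1 + lam * ∑' k, α k * (y ^ (k + 1) - 1))
          + (Real.exp (lam * ∑' k, α k * (y ^ (k + 1) - 1))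
              - 1 - lam * ∑' k, α k * (y ^ (k + 1) - 1)) := by
    funext y; ring
  have hDfeq : (D t)^[n] (fun y => Real.exp (lam * ∑' k, α k * (y ^ (k + 1) - 1))) 0
      = (D t)^[n] (fun z : ℝ => 1 + lam * ∑' k, α k * (z ^ (k + 1) - 1)) 0
        + (D t)^[n] (fun z : ℝ => Real.exp (lam * ∑' k, α k * (z ^ (k + 1) - 1))
            - 1 - lam * ∑' k, α k * (z ^ (k + 1) - 1)) 0 := by
    rw [hsplit]; exact D_iter_add t n _ _ 0
  have hD1 : (D t)^[n] (fun z : ℝ => 1 + lam * ∑' k, α k * (z ^ (k + 1) - 1)) 0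
      = (D t)^[n] (fun _ : ℝ => (1:ℝ)) 0
        + (D t)^[n] (fun z : ℝ => lam * ∑' k, α k * (z ^ (k + 1) - 1)) 0 :=
    D_iter_add t n _ _ 0
  have hD2 : (D t)^[n] (fun _ : ℝ => (1:ℝ)) 0 = 0 := D_iter_const t n 1 0 (by omega)
  have hD3 : (D t)^[n] (fun z : ℝ => lam * ∑' k, α k * (z ^ (k + 1) - 1)) 0
      = lam * (D t)^[n] (fun z : ℝ => ∑' k, α k * (z ^ (k + 1) - 1)) 0 :=
    D_iter_const_mul t n lam _ 0
  -- computing D^[n] g 0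
  have hgeq : ∀ y : ℝ, 0 ≤ y → y ≤ 1 →
      (∑' k, α k * (y ^ (k + 1) - 1)) = (∑' k, α k * y ^ (k + 1)) + (-1) := by
    intro y h0 h1
    have h2 : (∑' k, α k * (y ^ (k + 1) - 1)) = ∑' k, (α k * y ^ (k + 1) - α k) :=
      tsum_congr fun k => by ring
    rw [h2, Summable.tsum_sub (hws y h0 h1) hαs, hα1]
    ring
  have hDg1 : (D t)^[n] (fun z : ℝ => ∑' k, α k * (z ^ (k + 1) - 1)) 0
      = (D t)^[n] (fun z : ℝ => (∑' k, α k * z ^ (k + 1)) + (-1)) 0 := by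
    refine D_iter_congr t htpos.le n _ _ 0 fun y hy1 hy2 => ?_
    exact hgeq y hy1 (le_trans hy2 (by simpa using hnt1))
  have hDg2 : (D t)^[n] (fun z : ℝ => (∑' k, α k * z ^ (k + 1)) + (-1)) 0
      = (D t)^[n] (fun z : ℝ => ∑' k, α k * z ^ (k + 1)) 0
        + (D t)^[n] (fun _ : ℝ => (-1:ℝ)) 0 := D_iter_add t n _ _ 0
  have hDg3 : (D t)^[n] (fun _ : ℝ => (-1:ℝ)) 0 = 0 := D_iter_const t n (-1) 0 (by omega)
  have hDS : Summable (fun k => (D t)^[n] (fun y => α k * y ^ (k + 1)) 0)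
      ∧ (D t)^[n] (fun y => ∑' k, α k * y ^ (k + 1)) 0
        = ∑' k, (D t)^[n] (fun y => α k * y ^ (k + 1)) 0 :=
    D_iter_tsum t htpos.le (fun k y => α k * y ^ (k + 1)) hws n 0 le_rfl (by simpa using hnt1)
  have hQfun : (fun k => (D t)^[n] (fun y => α k * y ^ (k + 1)) 0)
      = fun k => α k * (D t)^[n] (fun y => y ^ (k + 1)) 0 := by
    funext k; exact D_iter_const_mul t n (α k) _ 0
  have hQsum : Summable (fun k => α k * (D t)^[n] (fun y => y ^ (k + 1)) 0) := by
    have h := hDS.1; rwa [hQfun] at h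
  have hQb : ∀ k : ℕ, |(D t)^[n] (fun y => y ^ (k + 1)) 0| ≤ 2 ^ n * ((n:ℝ) * t) ^ (k + 1) := by
    intro k
    refine D_iter_abs_le t htpos.le _ n _ 0 fun y hy1 hy2 => ?_
    rw [abs_of_nonneg (pow_nonneg hy1 _)]
    exact pow_le_pow_left₀ hy1 (by simpa using hy2) _
  have hsplitQ : (∑ j ∈ Finset.range (m + 1), α j * (D t)^[n] (fun y => y ^ (j + 1)) 0)
      + (∑' k : ℕ, α (k + (m + 1)) * (D t)^[n] (fun y => y ^ ((k + (m + 1)) + 1)) 0)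
      = ∑' k, α k * (D t)^[n] (fun y => y ^ (k + 1)) 0 :=
    Summable.sum_add_tsum_nat_add (m + 1) hQsum
  have hhead : ∑ j ∈ Finset.range (m + 1), α j * (D t)^[n] (fun y => y ^ (j + 1)) 0
      = α m * ((n.factorial : ℝ) * t ^ n) := by
    rw [Finset.sum_range_succ]
    have h0 : ∑ j ∈ Finset.range m, α j * (D t)^[n] (fun y => y ^ (j + 1)) 0 = 0 := by
      refine Finset.sum_eq_zero fun j hj => ?_
      have hj' : j < m := Finset.mem_range.mp hj
      rw [D_iter_pow_eq_zero t (j + 1) n 0 (by omega), mul_zero]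
    rw [h0, zero_add]
    congr 1
    have hmn : m + 1 = n := hn.symm
    rw [hmn, D_iter_pow_self t n 0]
  have htail : |∑' k : ℕ, α (k + (m + 1)) * (D t)^[n] (fun y => y ^ ((k + (m + 1)) + 1)) 0|
      ≤ 2 ^ n * ((n:ℝ) * t) ^ (n + 1) * A := by
    have hQs' : Summable fun k : ℕ =>
        α (k + (m + 1)) * (D t)^[n] (fun y => y ^ ((k + (m + 1)) + 1)) 0 :=
      (summable_nat_add_iff (f := fun k => α k * (D t)^[n] (fun y => y ^ (k + 1)) 0)
        (m + 1)).mpr hQsum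
    have hbd : ∀ k : ℕ, |α (k + (m + 1)) * (D t)^[n] (fun y => y ^ ((k + (m + 1)) + 1)) 0|
        ≤ 2 ^ n * ((n:ℝ) * t) ^ (n + 1) * |α (k + (m + 1))| := by
      intro k
      rw [abs_mul]
      have h1 := hQb (k + (m + 1))
      have h2 : ((n:ℝ) * t) ^ ((k + (m + 1)) + 1) ≤ ((n:ℝ) * t) ^ (n + 1) :=
        pow_le_pow_of_le_one hnt0 hnt1 (by omega)
      have h3 : |(D t)^[n] (fun y => y ^ ((k + (m + 1)) + 1)) 0|
          ≤ 2 ^ n * ((n:ℝ) * t) ^ (n + 1) := by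
        refine h1.trans ?_
        have hp : (0:ℝ) ≤ 2 ^ n := by positivity
        nlinarith
      calc |α (k + (m + 1))| * |(D t)^[n] (fun y => y ^ ((k + (m + 1)) + 1)) 0|
          ≤ |α (k + (m + 1))| * (2 ^ n * ((n:ℝ) * t) ^ (n + 1)) :=
            mul_le_mul_of_nonneg_left h3 (abs_nonneg _)
        _ = 2 ^ n * ((n:ℝ) * t) ^ (n + 1) * |α (k + (m + 1))| := by ring
    calc |∑' k : ℕ, α (k + (m + 1)) * (D t)^[n] (fun y => y ^ ((k + (m + 1)) + 1)) 0|
        ≤ ∑' k : ℕ, |α (k + (m + 1)) * (D t)^[n] (fun y => y ^ ((k + (m + 1)) + 1)) 0| := by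
          simpa only [Real.norm_eq_abs] using
            norm_tsum_le_tsum_norm
              (f := fun k : ℕ => α (k + (m + 1)) * (D t)^[n] (fun y => y ^ ((k + (m + 1)) + 1)) 0)
              (by simpa only [Real.norm_eq_abs] using hQs'.abs)
      _ ≤ ∑' k : ℕ, 2 ^ n * ((n:ℝ) * t) ^ (n + 1) * |α (k + (m + 1))| :=
          Summable.tsum_le_tsum hbd hQs'.abs
            (((summable_nat_add_iff (f := fun k => |α k|) (m+1)).mpr hαabs).mul_left _)
      _ = 2 ^ n * ((n:ℝ) * t) ^ (n + 1) * ∑' k : ℕ, |α (k + (m + 1))| := tsum_mul_left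
      _ ≤ 2 ^ n * ((n:ℝ) * t) ^ (n + 1) * A := by
          have h4 := Summable.sum_add_tsum_nat_add (f := fun k => |α k|) (m + 1) hαabs
          have h5 : 0 ≤ ∑ i ∈ Finset.range (m + 1), |α i| :=
            Finset.sum_nonneg fun i _ => abs_nonneg _
          have h6 : (∑' k : ℕ, |α (k + (m + 1))|) ≤ A := by rw [← hA] at h4; linarith
          exact mul_le_mul_of_nonneg_left h6
            (mul_nonneg (by positivity) (pow_nonneg hnt0 _))
  have hC2t : 2 ^ n * ((n:ℝ) * t) ^ (n + 1) * A ≤ δ := by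
    have hht : t ≤ a * (n.factorial : ℝ) / (C2 + 1) := by
      rw [htdef]; exact min_le_right _ _
    have h1 : t * (C2 + 1) ≤ a * (n.factorial : ℝ) := by
      rw [← le_div_iff₀ (by linarith : (0:ℝ) < C2 + 1)]; exact hht
    have h2 : 2 ^ n * ((n:ℝ) * t) ^ (n + 1) * A = (C2 * t) * t ^ n / 2 := by
      rw [hC2, mul_pow]; ring
    have h3 : C2 * t ≤ a * (n.factorial : ℝ) := by nlinarith [htpos.le]
    have h4 : (0:ℝ) ≤ t ^ n := pow_nonneg htpos.le n
    have h5 : C2 * t * t ^ n ≤ a * (n.factorial : ℝ) * t ^ n :=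
      mul_le_mul_of_nonneg_right h3 h4
    rw [h2, hδ]; linarith
  have hDgle : (D t)^[n] (fun z : ℝ => ∑' k, α k * (z ^ (k + 1) - 1)) 0 ≤ -δ := by
    rw [hDg1, hDg2, hDg3, add_zero, hDS.2, hQfun, ← hsplitQ, hhead]
    have habs := (abs_le.mp htail).2
    have hαm : α m * ((n.factorial : ℝ) * t ^ n) = -(2 * δ) := by
      rw [hδ, hadef]; ring
    rw [hαm]; linarith
  -- error term bound
  have hlamA : lam * A ≤ 1 := by
    have h1 : lam ≤ 1 / (A + 1) := le_of_lt (lt_of_lt_of_le hl1 (min_le_left _ _))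
    have h2 : lam * (A + 1) ≤ 1 := by
      rw [← le_div_iff₀ (by linarith : (0:ℝ) < A + 1)]; exact h1
    nlinarith
  have hEb : ∀ y : ℝ, 0 ≤ y → y ≤ 1 →
      |Real.exp (lam * ∑' k, α k * (y ^ (k + 1) - 1))
        - 1 - lam * ∑' k, α k * (y ^ (k + 1) - 1)| ≤ lam ^ 2 * A ^ 2 := by
    intro y h0 h1
    have hg := hgA y h0 h1
    have habs1 : |lam * ∑' k, α k * (y ^ (k + 1) - 1)| ≤ 1 := by
      rw [abs_mul, abs_of_pos hl0]
      calc lam * |∑' k, α k * (y ^ (k + 1) - 1)| ≤ lam * A :=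
            mul_le_mul_of_nonneg_left hg hl0.le
        _ ≤ 1 := hlamA
    have h2 := Real.abs_exp_sub_one_sub_id_le habs1
    refine h2.trans ?_
    have h3 : (lam * ∑' k, α k * (y ^ (k + 1) - 1)) ^ 2
        = lam ^ 2 * (∑' k, α k * (y ^ (k + 1) - 1)) ^ 2 := by ring
    rw [h3]
    have h4 : (∑' k, α k * (y ^ (k + 1) - 1)) ^ 2 ≤ A ^ 2 := by
      calc (∑' k, α k * (y ^ (k + 1) - 1)) ^ 2
          = |∑' k, α k * (y ^ (k + 1) - 1)| ^ 2 := (sq_abs _).symm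
        _ ≤ A ^ 2 := pow_le_pow_left₀ (abs_nonneg _) hg 2
    exact mul_le_mul_of_nonneg_left h4 (sq_nonneg lam)
  have hDE : |(D t)^[n] (fun z : ℝ => Real.exp (lam * ∑' k, α k * (z ^ (k + 1) - 1))
      - 1 - lam * ∑' k, α k * (z ^ (k + 1) - 1)) 0| ≤ 2 ^ n * (lam ^ 2 * A ^ 2) := by
    refine D_iter_abs_le t htpos.le _ n _ 0 fun y hy1 hy2 => ?_
    exact hEb y hy1 (le_trans hy2 (by simpa using hnt1))
  -- final contradiction
  have hflt : (D t)^[n] (fun y => Real.exp (lam * ∑' k, α k * (y ^ (k + 1) - 1))) 0 < 0 := by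
    have h1 : lam * (D t)^[n] (fun z : ℝ => ∑' k, α k * (z ^ (k + 1) - 1)) 0 ≤ lam * (-δ) :=
      mul_le_mul_of_nonneg_left hDgle hl0.le
    have h2 : lam < δ / (2 ^ n * A ^ 2 + 1) := lt_of_lt_of_le hl1 (min_le_right _ _)
    have h3 : lam * (2 ^ n * A ^ 2 + 1) < δ := by
      rw [← lt_div_iff₀ (by positivity : (0:ℝ) < 2 ^ n * A ^ 2 + 1)]; exact h2
    have h4 := (abs_le.mp hDE).2
    rw [hDfeq, hD1, hD2, zero_add, hD3]
    nlinarith [hl0, mul_lt_mul_of_pos_left h3 hl0, sq_nonneg lam]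
  rw [hcong] at hDFnn
  linarith
end

section
/- Proposition 4.2: Let S ⊆ (0,∞) satisfy: 1 ∈ S; S is closed under addition (a, b ∈ S implies a + b ∈ S); and S is closed as a subset of (0,∞) (every x ∈ (0,∞) that is a limit of points of S belongs to S). Then: (1) either S = (0,∞) or there exists λ > 0 such that S ⊆ [λ, ∞); (2) if S has nonempty interior, then there exists λ with 0 < λ < ∞ such that [λ, ∞) ⊆ S. -/
private lemma semigroup_nsmul (S : Set ℝ)
    (hadd : ∀ a ∈ S, ∀ b ∈ S, a + b ∈ S) :
    ∀ (n : ℕ), ∀ c ∈ S, ((n : ℝ) + 1) * c ∈ S := by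
  intro n
  induction n with
  | zero => intro c hc; simpa using hc
  | succ n ih =>
    intro c hc
    have : ((n : ℝ) + 1) * c + c ∈ S := hadd _ (ih c hc) _ hc
    have heq : ((n : ℝ) + 1) * c + c = (((n + 1 : ℕ) : ℝ) + 1) * c := by
      push_cast; ring
    rwa [heq] at this

/-- Proposition 4.2: a closed additive subsemigroup `S` of `(0,∞)` containing
`1` is either all of `(0,∞)` or is contained in some `[λ,∞)`; and if `S` has
nonempty interior then `S` contains some `[λ,∞)`. -/
theorem closed_semigroup_structure
    (S : Set ℝ) (hS : S ⊆ Set.Ioi 0) (h1 : (1 : ℝ) ∈ S)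
    (hadd : ∀ a ∈ S, ∀ b ∈ S, a + b ∈ S)
    (hclosed : ∀ x : ℝ, 0 < x → x ∈ closure S → x ∈ S) :
    (S = Set.Ioi 0 ∨ ∃ lam : ℝ, 0 < lam ∧ S ⊆ Set.Ici lam) ∧
    ((interior S).Nonempty → ∃ lam : ℝ, 0 < lam ∧ Set.Ici lam ⊆ S) := by
  have hmul := semigroup_nsmul S hadd
  constructor
  · by_cases h : ∃ lam : ℝ, 0 < lam ∧ S ⊆ Set.Ici lam
    · exact Or.inr h
    · left
      push_neg at h
      have hsmall : ∀ lam : ℝ, 0 < lam → ∃ s ∈ S, s < lam := by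
        intro lam hlam
        have := h lam hlam
        rw [Set.not_subset] at this
        obtain ⟨s, hsS, hs⟩ := this
        exact ⟨s, hsS, lt_of_not_ge hs⟩
      ext x
      constructor
      · exact fun hx => hS hx
      · intro hx
        have hx0 : (0 : ℝ) < x := hx
        refine hclosed x hx0 (Metric.mem_closure_iff.mpr ?_)
        intro ε hε
        obtain ⟨s, hsS, hslt⟩ := hsmall (min ε x) (lt_min hε hx0)
        have hs0 : 0 < s := hS hsS
        have hsε : s < ε := lt_of_lt_of_le hslt (min_le_left _ _)
        have hsx : s < x := lt_of_lt_of_le hslt (min_le_right _ _)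
        set n : ℕ := ⌊x / s⌋₊ with hn
        have hxs0 : 0 ≤ x / s := le_of_lt (div_pos hx0 hs0)
        have hfl : (n : ℝ) ≤ x / s := Nat.floor_le hxs0
        have hfu : x / s < (n : ℝ) + 1 := Nat.lt_floor_add_one _
        have hn1 : 1 ≤ n := by
          rw [hn]
          apply Nat.le_floor
          rw [Nat.cast_one, le_div_iff₀ hs0, one_mul]
          exact hsx.le
        obtain ⟨m, hm⟩ := Nat.exists_eq_add_of_le hn1
        rw [hm] at hfl hfu
        refine ⟨((m : ℝ) + 1) * s, hmul m s hsS, ?_⟩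
        have hcast : ((1 + m : ℕ) : ℝ) = (m : ℝ) + 1 := by push_cast; ring
        rw [hcast] at hfl hfu
        have h1' : ((m : ℝ) + 1) * s ≤ x := by
          rw [← le_div_iff₀ hs0]; exact hfl
        have h2' : x < ((m : ℝ) + 1) * s + s := by
          have := (div_lt_iff₀ hs0).mp hfu
          linarith
        rw [Real.dist_eq, abs_of_nonneg (by linarith)]
        linarith
  · rintro ⟨x, hxint⟩
    have hxS : x ∈ S := interior_subset hxint
    have hx0 : 0 < x := hS hxS
    obtain ⟨ε, hε0, hball⟩ := Metric.isOpen_iff.mp isOpen_interior x hxint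
    set δ : ℝ := min (ε / 2) (x / 2) with hδ
    have hδ0 : 0 < δ := lt_min (by linarith) (by linarith)
    set a : ℝ := x - δ with ha
    set b : ℝ := x + δ with hb
    have ha0 : 0 < a := by
      have : δ ≤ x / 2 := min_le_right _ _
      simp only [ha]; linarith
    have hab : a < b := by simp only [ha, hb]; linarith
    have hIcc : Set.Icc a b ⊆ S := by
      intro y hy
      have hmem : y ∈ Metric.ball x ε := by
        rw [Metric.mem_ball, Real.dist_eq, abs_lt]
        have hy1 := hy.1
        have hy2 := hy.2
        have hδε : δ ≤ ε / 2 := min_le_left _ _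
        constructor
        · simp only [ha] at hy1; linarith
        · simp only [hb] at hy2; linarith
      exact interior_subset (hball hmem)
    have hnIcc : ∀ n : ℕ, ∀ y : ℝ, ((n : ℝ) + 1) * a ≤ y → y ≤ ((n : ℝ) + 1) * b → y ∈ S := by
      intro n y hya hyb
      have hn0 : (0 : ℝ) < (n : ℝ) + 1 := by positivity
      have hyS : y / ((n : ℝ) + 1) ∈ Set.Icc a b := by
        constructor
        · rw [le_div_iff₀ hn0]; linarith [hya]
        · rw [div_le_iff₀ hn0]; linarith [hyb]
      have := hmul n _ (hIcc hyS)
      rwa [mul_div_cancel₀ _ (ne_of_gt hn0)] at this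
    set N : ℕ := ⌈a / (b - a)⌉₊ with hN
    have hba : 0 < b - a := by linarith
    have hNge : a ≤ ((N : ℝ) + 1) * (b - a) := by
      have h1' : a / (b - a) ≤ (N : ℝ) := Nat.le_ceil _
      have := (div_le_iff₀ hba).mp h1'
      nlinarith
    refine ⟨((N : ℝ) + 1) * a, by positivity, ?_⟩
    intro y hy
    have hy' : ((N : ℝ) + 1) * a ≤ y := hy
    set k : ℕ := ⌊y / a⌋₊ with hk
    have hy0 : 0 < y := lt_of_lt_of_le (by positivity) hy'
    have hfl : (k : ℝ) ≤ y / a := Nat.floor_le (le_of_lt (div_pos hy0 ha0))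
    have hfu : y / a < (k : ℝ) + 1 := Nat.lt_floor_add_one _
    have hkN : N + 1 ≤ k := by
      rw [hk]
      apply Nat.le_floor
      rw [le_div_iff₀ ha0]
      have hc : ((N + 1 : ℕ) : ℝ) = (N : ℝ) + 1 := by push_cast; ring
      rw [hc]; exact hy'
    obtain ⟨m, hm⟩ := Nat.exists_eq_add_of_le hkN
    rw [hm] at hfl hfu
    have hcast : ((N + 1 + m : ℕ) : ℝ) = ((N : ℝ) + m) + 1 := by push_cast; ring
    rw [hcast] at hfl hfu
    refine hnIcc (N + m) y ?_ ?_
    · have hc : ((N + m : ℕ) : ℝ) = (N : ℝ) + m := by push_cast; ring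
      rw [hc, ← le_div_iff₀ ha0]
      exact hfl
    · have hcast2 : ((N + m : ℕ) : ℝ) = (N : ℝ) + m := by push_cast; ring
      rw [hcast2]
      have hyu : y < (((N : ℝ) + m) + 1) * a + a := by
        have := (div_lt_iff₀ ha0).mp hfu
        nlinarith
      have hm0 : (0 : ℝ) ≤ (m : ℝ) := Nat.cast_nonneg m
      nlinarith [hNge]
end
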